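/- arXiv:1308.5155 — 4 statements merged into one kernel-verified Lean document; each statement's English description precedes it below -/
import Mathlib

section
/- Let a, b ∈ ℚ. For t ∈ ℂ with Im t > 0, let φ(t) be the symmetric 3×3 complex matrix with rows ((t + a²i, (a²−b²)/2 + abi, −b + ai), ((a²−b²)/2 + abi, t + 2ab + b²i, a + bi), (−b + ai, a + bi, i)). Then φ(t) lies in the Siegel upper half-space ℍ₃, and the theta constant with characteristic ε = (1,1,0), δ = (1,1,0) vanishes there: θ[(1,1,0);(1,1,0)](φ(t), 0) = 0 for every t with Im t > 0. -/
open Complex Matrix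

/-- The genus-`g` theta function with characteristic `[ε; δ]`:
`θ[ε;δ](τ, z) = Σ_{N ∈ ℤ^g} exp(πi (N+ε/2)ᵀ τ (N+ε/2) + 2πi (N+ε/2)ᵀ (z+δ/2))`. -/
noncomputable def theta (g : ℕ) (ε δ : Fin g → ℤ) (τ : Matrix (Fin g) (Fin g) ℂ)
    (z : Fin g → ℂ) : ℂ :=
  ∑' N : Fin g → ℤ,
    Complex.exp (↑Real.pi * I *
        (∑ j, ∑ k, ((N j : ℂ) + (ε j : ℂ) / 2) * τ j k * ((N k : ℂ) + (ε k : ℂ) / 2)) +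
      2 * ↑Real.pi * I *
        (∑ j, ((N j : ℂ) + (ε j : ℂ) / 2) * (z j + (δ j : ℂ) / 2)))

/-- Membership in the Siegel upper half-space: symmetric with positive definite
imaginary part. -/
def SiegelUpper (g : ℕ) (τ : Matrix (Fin g) (Fin g) ℂ) : Prop :=
  τ.IsSymm ∧ (Matrix.of fun j k => (τ j k).im : Matrix (Fin g) (Fin g) ℝ).PosDef

/-- The period matrix `φ(t)` of the Shimura curve family, for parameters `a, b ∈ ℚ`. -/
noncomputable def phi (a b : ℚ) (t : ℂ) : Matrix (Fin 3) (Fin 3) ℂ :=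
  !![t + (a : ℂ)^2 * I, ((a : ℂ)^2 - (b : ℂ)^2)/2 + (a : ℂ)*(b : ℂ)*I, -(b : ℂ) + (a : ℂ)*I;
     ((a : ℂ)^2 - (b : ℂ)^2)/2 + (a : ℂ)*(b : ℂ)*I, t + 2*(a : ℂ)*(b : ℂ) + (b : ℂ)^2 * I,
       (a : ℂ) + (b : ℂ)*I;
     -(b : ℂ) + (a : ℂ)*I, (a : ℂ) + (b : ℂ)*I, I]

/-! ### Auxiliary machinery for the proof -/

namespace ShimuraThetaAux

noncomputable section

/-- Half-integer `n + 1/2`. -/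
def mm (n : ℤ) : ℝ := (n : ℝ) + 1/2
def uu (a b : ℚ) (n1 n2 : ℤ) : ℝ := a * mm n1 + b * mm n2
def vv (a b : ℚ) (n1 n2 : ℤ) : ℝ := a * mm n2 - b * mm n1
def ss (n1 n2 : ℤ) : ℝ := mm n1 ^ 2 + mm n2 ^ 2
def zz (a b : ℚ) (n1 n2 : ℤ) : ℂ := ((vv a b n1 n2 : ℝ) : ℂ) + ((uu a b n1 n2 : ℝ) : ℂ) * I

/-- The exponent of the theta series term, in normal form. -/
def Efun (a b : ℚ) (t : ℂ) (n1 n2 n3 : ℤ) : ℂ :=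
  (Real.pi : ℂ) * I * (t * ((ss n1 n2 : ℝ) : ℂ)) +
  ((Real.pi * ((a:ℝ) * b * ss n1 n2 + vv a b n1 n2 * (uu a b n1 n2 + 2 * n3)
      + (mm n1 + mm n2)) : ℝ) : ℂ) * I -
  ((Real.pi * (uu a b n1 n2 + n3) ^ 2 : ℝ) : ℂ)

/-- The constant (in `n3`) factor's exponent. -/
def Cfun (a b : ℚ) (t : ℂ) (n1 n2 : ℤ) : ℂ :=
  (Real.pi : ℂ) * I * (t * ((ss n1 n2 : ℝ) : ℂ)) +
  ((Real.pi * ((a:ℝ) * b * ss n1 n2 + vv a b n1 n2 * uu a b n1 n2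
      + (mm n1 + mm n2)) : ℝ) : ℂ) * I -
  ((Real.pi * (uu a b n1 n2) ^ 2 : ℝ) : ℂ)

/-- The outer summand after summing over `n3`. -/
def Gfun (a b : ℚ) (t : ℂ) (n1 n2 : ℤ) : ℂ :=
  Complex.exp (Cfun a b t n1 n2) * jacobiTheta₂ (zz a b n1 n2) I

/-- Regrouping `ℤ³`. -/
def eqv3 : (Fin 3 → ℤ) ≃ (ℤ × ℤ) × ℤ where
  toFun := fun N => ((N 0, N 1), N 2)
  invFun := fun p => ![p.1.1, p.1.2, p.2]
  left_inv := fun N => by funext i; fin_cases i <;> rfl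
  right_inv := fun p => rfl

/-- The pairing `(n1, n2) ↦ (-n2-1, n1)`. -/
def pairEquiv : (ℤ × ℤ) ≃ (ℤ × ℤ) where
  toFun := fun q => (-q.2-1, q.1)
  invFun := fun q => (q.2, -q.1-1)
  left_inv := fun q => by simp [Prod.ext_iff]
  right_inv := fun q => by simp [Prod.ext_iff]

/-- Rewriting the theta series term. -/
lemma term_eq (a b : ℚ) (t : ℂ) (N : Fin 3 → ℤ) :
    (↑Real.pi * I *
        (∑ j, ∑ k, ((N j : ℂ) + ((![1,1,0] : Fin 3 → ℤ) j : ℂ) / 2) * phi a b t j k *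
          ((N k : ℂ) + ((![1,1,0] : Fin 3 → ℤ) k : ℂ) / 2)) +
      2 * ↑Real.pi * I *
        (∑ j, ((N j : ℂ) + ((![1,1,0] : Fin 3 → ℤ) j : ℂ) / 2) *
          ((0 : Fin 3 → ℂ) j + ((![1,1,0] : Fin 3 → ℤ) j : ℂ) / 2)))
    = ShimuraThetaAux.Efun a b t (N 0) (N 1) (N 2) := by
  simp only [Fin.sum_univ_three, phi, Efun, mm, uu, vv, ss, Matrix.cons_val_zero,
    Matrix.cons_val_one, Matrix.head_cons, Matrix.cons_val_two, Matrix.tail_cons,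
    Matrix.head_fin_const, Pi.zero_apply, Matrix.of_apply, Matrix.cons_val', Matrix.empty_val',
    Matrix.cons_val_fin_one]
  push_cast
  ring_nf
  rw [Complex.I_sq]
  ring

/-- Real part of an exponent in normal form. -/
lemma re_aux (x y w : ℝ) (t : ℂ) :
    ((Real.pi : ℂ) * I * (t * ((x:ℝ):ℂ)) + ((y:ℝ):ℂ) * I - ((w:ℝ):ℂ)).re
      = -(Real.pi * t.im * x) - w := by
  simp [Complex.mul_re, Complex.mul_im]
  ring

/-- Norm of each term. -/
lemma norm_term (a b : ℚ) (t : ℂ) (n1 n2 n3 : ℤ) :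
    ‖Complex.exp (ShimuraThetaAux.Efun a b t n1 n2 n3)‖ =
      Real.exp (-(Real.pi * t.im * ss n1 n2) - Real.pi * (uu a b n1 n2 + n3) ^ 2) := by
  rw [Complex.norm_exp]
  congr 1
  simp only [Efun]
  exact re_aux _ _ _ t

/-- Summability of shifted Gaussians over `ℤ`. -/
lemma summable_shift (c r : ℝ) (hc : 0 < c) :
    Summable fun n : ℤ => Real.exp (-c * ((n : ℝ) + r) ^ 2) := by
  have hτ : (0:ℝ) < (((c / Real.pi : ℝ) : ℂ) * I).im := by
    simp [div_pos hc Real.pi_pos]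
  have h : Summable fun n : ℤ =>
      jacobiTheta₂_term n (((c * r / Real.pi : ℝ) : ℂ) * I) (((c / Real.pi : ℝ) : ℂ) * I) :=
    (summable_jacobiTheta₂_term_iff _ _).mpr hτ
  have h2 := (h.norm).mul_left (Real.exp (-(c * r ^ 2)))
  apply h2.congr
  intro n
  rw [norm_jacobiTheta₂_term, ← Real.exp_add]
  congr 1
  have hπ := Real.pi_ne_zero
  simp only [Complex.mul_im, Complex.ofReal_re, Complex.ofReal_im, Complex.I_im, Complex.I_re,
    mul_one, mul_zero, zero_mul, add_zero, zero_add]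
  field_simp
  ring

/-- The Jacobi transformation at `τ = I`. -/
lemma jt2_neg_I_mul (z : ℂ) :
    jacobiTheta₂ (-I * z) I = Complex.exp ((Real.pi : ℂ) * z ^ 2) * jacobiTheta₂ z I := by
  have h := jacobiTheta₂_functional_equation z I
  have h1 : (-I * I : ℂ) = 1 := by simp [Complex.I_mul_I]
  have h2 : (-(Real.pi : ℂ) * I * z ^ 2 / I) = -((Real.pi : ℂ) * z ^ 2) := by
    rw [Complex.div_I]; ring_nf; rw [Complex.I_sq]; ring
  have h3 : (z / I) = -I * z := by rw [Complex.div_I]; ring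
  have h4 : (-1 / I : ℂ) = I := by rw [Complex.div_I]; ring
  rw [h1, one_cpow, h2, h3, h4] at h
  rw [h]
  rw [show (1:ℂ)/1 * Complex.exp (-((Real.pi:ℂ) * z ^ 2)) * jacobiTheta₂ (-I * z) I
      = Complex.exp (-((Real.pi:ℂ) * z ^ 2)) * jacobiTheta₂ (-I * z) I by ring]
  rw [← mul_assoc, ← Complex.exp_add]
  simp

set_option maxHeartbeats 1000000 in
/-- Summability of the full triple series. -/
lemma summable_full (a b : ℚ) (t : ℂ) (ht : 0 < t.im) :
    Summable fun p : (ℤ × ℤ) × ℤ => Complex.exp (ShimuraThetaAux.Efun a b t p.1.1 p.1.2 p.2) := by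
  set C : ℝ := max ((1 + 3*(a:ℝ)^2 + 3*(b:ℝ)^2)/t.im) 3 with hC
  have hC3 : (3:ℝ) ≤ C := le_max_right _ _
  have hC0 : (0:ℝ) < C := lt_of_lt_of_le (by norm_num) hC3
  have hCIt : 1 + 3*(a:ℝ)^2 + 3*(b:ℝ)^2 ≤ C * t.im := by
    have h := le_max_left ((1 + 3*(a:ℝ)^2 + 3*(b:ℝ)^2)/t.im) 3
    exact (div_le_iff₀ ht).mp (h.trans_eq hC.symm)
  set d : ℝ := Real.pi / C with hd
  have hd0 : 0 < d := div_pos Real.pi_pos hC0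
  have S1 : Summable fun n : ℤ => Real.exp (-d * ((n:ℝ) + 1/2) ^ 2) :=
    summable_shift d (1/2) hd0
  have S3 : Summable fun n : ℤ => Real.exp (-d * ((n:ℝ)) ^ 2) := by
    have := summable_shift d 0 hd0
    simpa using this
  have S12 : Summable fun q : ℤ × ℤ =>
      Real.exp (-d * ((q.1:ℝ) + 1/2) ^ 2) * Real.exp (-d * ((q.2:ℝ) + 1/2) ^ 2) :=
    S1.mul_of_nonneg S1 (fun _ => (Real.exp_pos _).le) (fun _ => (Real.exp_pos _).le)
  have S123 : Summable fun p : (ℤ × ℤ) × ℤ =>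
      (Real.exp (-d * ((p.1.1:ℝ) + 1/2) ^ 2) * Real.exp (-d * ((p.1.2:ℝ) + 1/2) ^ 2)) *
        Real.exp (-d * ((p.2:ℝ)) ^ 2) :=
    S12.mul_of_nonneg S3
      (fun _ => mul_nonneg (Real.exp_pos _).le (Real.exp_pos _).le)
      (fun _ => (Real.exp_pos _).le)
  apply Summable.of_norm_bounded S123
  rintro ⟨⟨n1, n2⟩, n3⟩
  rw [norm_term]
  rw [← Real.exp_add, ← Real.exp_add]
  apply Real.exp_le_exp.mpr
  set m1 : ℝ := mm n1 with hm1
  set m2 : ℝ := mm n2 with hm2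
  set y : ℝ := uu a b n1 n2 + n3 with hy
  have hssv : ss n1 n2 = m1^2 + m2^2 := rfl
  have hyv : (n3:ℝ) = y - (a:ℝ)*m1 - (b:ℝ)*m2 := by
    rw [hy, uu]; ring
  have h5 : (n3:ℝ)^2 ≤ 3*y^2 + 3*(a:ℝ)^2*m1^2 + 3*(b:ℝ)^2*m2^2 := by
    rw [hyv]
    nlinarith [sq_nonneg (y + (a:ℝ)*m1), sq_nonneg (y + (b:ℝ)*m2),
      sq_nonneg ((a:ℝ)*m1 - (b:ℝ)*m2), sq_nonneg (y - (a:ℝ)*m1), sq_nonneg (y - (b:ℝ)*m2),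
      sq_nonneg ((a:ℝ)*m1 + (b:ℝ)*m2)]
  have hA : (1 + 3*(a:ℝ)^2 + 3*(b:ℝ)^2)*(m1^2 + m2^2) ≤ C * (t.im * (m1^2 + m2^2)) := by
    have h1 : 0 ≤ m1^2 + m2^2 := by positivity
    nlinarith [mul_le_mul_of_nonneg_right hCIt h1]
  have hB : 3*y^2 ≤ C*y^2 := by nlinarith [sq_nonneg y]
  have hkey : m1^2 + m2^2 + (n3:ℝ)^2 ≤ C * (t.im * (m1^2 + m2^2) + y^2) := by
    nlinarith [h5, hA, hB, mul_nonneg (sq_nonneg (a:ℝ)) (sq_nonneg m2),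
      mul_nonneg (sq_nonneg (b:ℝ)) (sq_nonneg m1)]
  have hdC : d * C = Real.pi := div_mul_cancel₀ _ (ne_of_gt hC0)
  have : d * (m1^2 + m2^2 + (n3:ℝ)^2) ≤ Real.pi * (t.im * (m1^2 + m2^2) + y^2) := by
    calc d * (m1^2 + m2^2 + (n3:ℝ)^2) ≤ d * (C * (t.im * (m1^2 + m2^2) + y^2)) := by
          exact mul_le_mul_of_nonneg_left hkey hd0.le
      _ = Real.pi * (t.im * (m1^2 + m2^2) + y^2) := by rw [← mul_assoc, hdC]
  rw [hssv]
  have hmm1 : ((n1:ℝ) + 1/2) = m1 := rfl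
  have hmm2 : ((n2:ℝ) + 1/2) = m2 := rfl
  rw [hmm1, hmm2]
  linarith [this]

/-- Summing over `n3` gives a Jacobi theta value. -/
lemma inner_sum (a b : ℚ) (t : ℂ) (n1 n2 : ℤ) :
    ∑' n3 : ℤ, Complex.exp (ShimuraThetaAux.Efun a b t n1 n2 n3) = ShimuraThetaAux.Gfun a b t n1 n2 := by
  have hterm : ∀ n3 : ℤ, Complex.exp (ShimuraThetaAux.Efun a b t n1 n2 n3)
      = Complex.exp (Cfun a b t n1 n2) * jacobiTheta₂_term n3 (zz a b n1 n2) I := by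
    intro n3
    rw [jacobiTheta₂_term, ← Complex.exp_add]
    congr 1
    simp only [Efun, Cfun, zz, mm, uu, vv, ss]
    push_cast
    ring_nf
    rw [Complex.I_sq]
    ring
  rw [tsum_congr hterm, tsum_mul_left]
  rfl

/-- The key sign-flip under the pairing `(n1, n2) ↦ (-n2-1, n1)`. -/
lemma pairing (a b : ℚ) (t : ℂ) (n1 n2 : ℤ) :
    ShimuraThetaAux.Gfun a b t (-n2-1) n1 = -ShimuraThetaAux.Gfun a b t n1 n2 := by
  have hz : zz a b (-n2-1) n1 = -I * zz a b n1 n2 := by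
    simp only [zz, uu, vv, mm]
    push_cast
    ring_nf
    rw [Complex.I_sq]
    ring
  have key : Cfun a b t (-n2-1) n1 + (Real.pi : ℂ) * (zz a b n1 n2) ^ 2
      = Cfun a b t n1 n2 + ((2*(n2:ℤ)+1 : ℤ) : ℂ) * (-((Real.pi : ℂ) * I)) := by
    simp only [Cfun, zz, uu, vv, ss, mm]
    push_cast
    ring_nf
    rw [Complex.I_sq]
    ring
  have hodd : Odd (2*n2+1 : ℤ) := ⟨n2, by ring⟩
  have hexp : Complex.exp (((2*(n2:ℤ)+1 : ℤ) : ℂ) * (-((Real.pi : ℂ) * I))) = -1 := by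
    rw [Complex.exp_int_mul]
    have h1 : Complex.exp (-((Real.pi : ℂ) * I)) = -1 := by
      rw [Complex.exp_neg, Complex.exp_pi_mul_I]
      norm_num
    rw [h1]
    exact hodd.neg_one_zpow
  rw [Gfun, Gfun, hz, jt2_neg_I_mul, ← mul_assoc, ← Complex.exp_add, key,
    Complex.exp_add, hexp]
  ring

end

end ShimuraThetaAux

theorem stmt_0 (a b : ℚ) (t : ℂ) (ht : 0 < t.im) :
    SiegelUpper 3 (phi a b t) ∧
      theta 3 ![1, 1, 0] ![1, 1, 0] (phi a b t) 0 = 0 := by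
  constructor
  · constructor
    · rw [Matrix.IsSymm]
      ext i j
      fin_cases i <;> fin_cases j <;> simp [phi]
    · have hM : (Matrix.of (fun j k => ((phi a b t) j k).im) : Matrix (Fin 3) (Fin 3) ℝ)
          = !![t.im + (a:ℝ)^2, (a:ℝ)*(b:ℝ), (a:ℝ);
               (a:ℝ)*(b:ℝ), t.im + (b:ℝ)^2, (b:ℝ);
               (a:ℝ), (b:ℝ), 1] := by
        ext i j
        fin_cases i <;> fin_cases j <;>
          simp [phi, pow_two, Complex.mul_im, Complex.mul_re]
      rw [hM, Matrix.posDef_iff_dotProduct_mulVec]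
      constructor
      · rw [Matrix.IsHermitian]
        ext i j
        fin_cases i <;> fin_cases j <;> simp [Matrix.conjTranspose_apply]
      · intro x hx
        have key : dotProduct (star x)
            ((!![t.im + (a:ℝ)^2, (a:ℝ)*(b:ℝ), (a:ℝ);
               (a:ℝ)*(b:ℝ), t.im + (b:ℝ)^2, (b:ℝ);
               (a:ℝ), (b:ℝ), 1] : Matrix (Fin 3) (Fin 3) ℝ) *ᵥ x)
            = t.im*(x 0)^2 + t.im*(x 1)^2 + ((a:ℝ)*(x 0) + (b:ℝ)*(x 1) + x 2)^2 := by
          simp [dotProduct, Matrix.mulVec, Fin.sum_univ_three]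
          ring
        rw [key]
        by_cases hX : x 0 = 0
        · by_cases hY : x 1 = 0
          · have hZ : x 2 ≠ 0 := by
              intro h
              exact hx (funext fun i => by fin_cases i <;> simp [hX, hY, h])
            have h2 : 0 < (x 2)^2 := (sq_nonneg _).lt_of_ne' (pow_ne_zero 2 hZ)
            rw [hX, hY]
            nlinarith [h2]
          · have h2 : 0 < (x 1)^2 := (sq_nonneg _).lt_of_ne' (pow_ne_zero 2 hY)
            nlinarith [mul_pos ht h2, mul_nonneg ht.le (sq_nonneg (x 0)),
              sq_nonneg ((a:ℝ)*(x 0) + (b:ℝ)*(x 1) + x 2)]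
        · have h2 : 0 < (x 0)^2 := (sq_nonneg _).lt_of_ne' (pow_ne_zero 2 hX)
          nlinarith [mul_pos ht h2, mul_nonneg ht.le (sq_nonneg (x 1)),
            sq_nonneg ((a:ℝ)*(x 0) + (b:ℝ)*(x 1) + x 2)]
  · have hsum := ShimuraThetaAux.summable_full a b t ht
    have hmain : theta 3 ![1, 1, 0] ![1, 1, 0] (phi a b t) 0
        = ∑' q : ℤ × ℤ, ShimuraThetaAux.Gfun a b t q.1 q.2 := by
      calc theta 3 ![1, 1, 0] ![1, 1, 0] (phi a b t) 0
          = ∑' N : Fin 3 → ℤ, Complex.exp (ShimuraThetaAux.Efun a b t (N 0) (N 1) (N 2)) := by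
            rw [theta]; exact tsum_congr (fun N => congrArg Complex.exp (ShimuraThetaAux.term_eq a b t N))
        _ = ∑' p : (ℤ × ℤ) × ℤ, Complex.exp (ShimuraThetaAux.Efun a b t p.1.1 p.1.2 p.2) :=
            ShimuraThetaAux.eqv3.tsum_eq (fun p => Complex.exp (ShimuraThetaAux.Efun a b t p.1.1 p.1.2 p.2))
        _ = ∑' q : ℤ × ℤ, ∑' n3 : ℤ, Complex.exp (ShimuraThetaAux.Efun a b t q.1 q.2 n3) := Summable.tsum_prod hsum
        _ = ∑' q : ℤ × ℤ, ShimuraThetaAux.Gfun a b t q.1 q.2 :=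
            tsum_congr fun q => ShimuraThetaAux.inner_sum a b t q.1 q.2
    rw [hmain]
    set S : ℂ := ∑' q : ℤ × ℤ, ShimuraThetaAux.Gfun a b t q.1 q.2 with hS
    have h1 : S = -S := by
      calc S = ∑' q : ℤ × ℤ, ShimuraThetaAux.Gfun a b t (-q.2-1) q.1 :=
            (ShimuraThetaAux.pairEquiv.tsum_eq (fun q => ShimuraThetaAux.Gfun a b t q.1 q.2)).symm
        _ = ∑' q : ℤ × ℤ, -(ShimuraThetaAux.Gfun a b t q.1 q.2) :=
            tsum_congr fun q => ShimuraThetaAux.pairing a b t q.1 q.2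
        _ = -S := tsum_neg
    have h2 : (2:ℂ) * S = 0 := by linear_combination h1
    rcases mul_eq_zero.mp h2 with h | h
    · exact absurd h two_ne_zero
    · exact h
end

section
/- Let g ≥ 2 and let τ ∈ ℍ_g be written in block form τ = [[t, zᵀ],[z, Z]] with t ∈ ℂ, z ∈ ℂ^{g−1} and Z a symmetric (g−1)×(g−1) matrix (then Z ∈ ℍ_{g−1}). Then for all x ∈ ℂ, b ∈ ℂ^{g−1}, δ₁ ∈ {0,1} and ε, δ ∈ {0,1}^{g−1}: θ[(0,ε);(δ₁,δ)](τ, (x,b)) = Σ_{N ∈ ℤ} exp(πi N² t + 2πi N x) · (−1)^{N δ₁} · θ[ε;δ](Z, b + N z), the series on the right being absolutely convergent. -/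
open Complex Matrix

lemma aux_quad_bound (a bb s : ℝ) (ha : 0 < a) (m : ℝ) :
    -a * (m + s)^2 + bb * |m + s| ≤ (|bb|+1)^2/(4*a) + |s| - |m| := by
  have h1 : |m| ≤ |m + s| + |s| := by
    calc |m| = |(m + s) + (-s)| := by ring_nf
    _ ≤ |m + s| + |-s| := abs_add_le _ _
    _ = |m + s| + |s| := by rw [abs_neg]
  have h2 : bb * |m + s| ≤ |bb| * |m + s| :=
    mul_le_mul_of_nonneg_right (le_abs_self bb) (abs_nonneg _)
  have h3 : (m + s)^2 = |m + s|^2 := (_root_.sq_abs _).symm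
  have h4 : 4*a*((|bb|+1)^2/(4*a)) = (|bb|+1)^2 := by field_simp
  have h5 : (|bb|+1) * |m+s| - (|bb|+1)^2/(4*a) ≤ a * |m+s|^2 := by
    nlinarith [sq_nonneg (2*a*|m+s| - (|bb|+1)), ha]
  nlinarith [abs_nonneg (m+s), h1, h2, h3, h5]

lemma aux_summable_exp_neg_abs : Summable (fun m : ℤ => Real.exp (-|(m : ℝ)|)) := by
  have hnat : Summable (fun n : ℕ => Real.exp (-1) ^ n) :=
    summable_geometric_of_lt_one (Real.exp_pos _).le (by
      rw [Real.exp_lt_one_iff]; norm_num)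
  have hnat' : Summable (fun n : ℕ => Real.exp (-|(n : ℝ)|)) := by
    refine hnat.congr fun n => ?_
    rw [← Real.exp_nat_mul]
    congr 1
    rw [_root_.abs_of_nonneg (by positivity : (0:ℝ) ≤ (n:ℝ))]
    ring
  refine Summable.of_nat_of_neg hnat' (hnat'.congr fun n => ?_)
  push_cast
  rw [abs_neg]

lemma aux_summable_shift (a bb s : ℝ) (ha : 0 < a) :
    Summable (fun m : ℤ => Real.exp (-a * ((m : ℝ) + s)^2 + bb * |(m : ℝ) + s|)) := by
  refine Summable.of_nonneg_of_le (f := fun m : ℤ =>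
      Real.exp ((|bb|+1)^2/(4*a) + |s|) * Real.exp (-|(m:ℝ)|))
    (fun m => (Real.exp_pos _).le) (fun m => ?_)
    (aux_summable_exp_neg_abs.mul_left _)
  rw [← Real.exp_add]
  exact Real.exp_le_exp.mpr (by linarith [aux_quad_bound a bb s ha (m : ℝ)])

lemma aux_summable_pi : ∀ (g : ℕ) (f : Fin g → ℤ → ℝ), (∀ j, Summable (f j)) →
    (∀ j m, 0 ≤ f j m) → Summable (fun N : Fin g → ℤ => ∏ j, f j (N j)) := by
  intro g
  induction g with
  | zero =>
    intro f _ _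
    haveI : Finite (Fin 0 → ℤ) := by infer_instance
    exact Summable.of_finite
  | succ g ih =>
    intro f hf hf0
    have htail : Summable (fun N : Fin g → ℤ => ∏ j, f j.succ (N j)) :=
      ih (fun j => f j.succ) (fun j => hf j.succ) (fun j m => hf0 j.succ m)
    have htail0 : ∀ N : Fin g → ℤ, 0 ≤ ∏ j, f j.succ (N j) :=
      fun N => Finset.prod_nonneg fun j _ => hf0 j.succ (N j)
    have key0 := Summable.mul_of_nonneg (hf 0) htail (fun m => hf0 0 m) htail0
    have key : Summable (fun p : ℤ × (Fin g → ℤ) => f 0 p.1 * ∏ j, f j.succ (p.2 j)) :=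
      key0.congr fun p => rfl
    have h2 : Summable ((fun N : Fin (g+1) → ℤ => ∏ j, f j (N j)) ∘
        (Fin.consEquiv fun _ => ℤ)) := by
      refine key.congr fun p => ?_
      simp [Fin.consEquiv, Fin.prod_univ_succ]
    exact ((Fin.consEquiv fun _ => ℤ).summable_iff).mp h2

lemma aux_posdef_bound {g : ℕ} {A : Matrix (Fin g) (Fin g) ℝ} (hA : A.PosDef) :
    ∃ c : ℝ, 0 < c ∧ ∀ v : Fin g → ℝ,
      c * (∑ j, v j ^ 2) ≤ ∑ j, ∑ k, v j * A j k * v k := by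
  have hquad : ∀ v : Fin g → ℝ, (∑ j, ∑ k, v j * A j k * v k) = v ⬝ᵥ A *ᵥ v := by
    intro v
    simp only [dotProduct, Matrix.mulVec, Finset.mul_sum]
    exact Finset.sum_congr rfl fun j _ => Finset.sum_congr rfl fun k _ => by ring
  rcases Nat.eq_zero_or_pos g with hg | hg
  · subst hg
    exact ⟨1, one_pos, fun v => by simp⟩
  haveI : Nonempty (Fin g) := Fin.pos_iff_nonempty.mp hg
  set E := EuclideanSpace ℝ (Fin g)
  haveI : Nontrivial E := by
    refine ⟨0, EuclideanSpace.single ⟨0, hg⟩ 1, fun h => ?_⟩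
    have := congrArg (fun u : E => u ⟨0, hg⟩) h
    simp only [EuclideanSpace.single_apply, if_pos rfl] at this
    have h0 : (0 : E) ⟨0, hg⟩ = 0 := rfl
    rw [h0] at this
    exact one_ne_zero this.symm
  have hfc : Continuous (fun u : E => ∑ j, ∑ k, u j * A j k * u k) := by
    refine continuous_finset_sum _ fun j _ => continuous_finset_sum _ fun k _ => ?_
    exact ((((continuous_apply j).comp (PiLp.continuous_ofLp _ _)).mul continuous_const).mul
      ((continuous_apply k).comp (PiLp.continuous_ofLp _ _)))
  have hne : (Metric.sphere (0:E) 1).Nonempty := NormedSpace.sphere_nonempty.mpr zero_le_one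
  obtain ⟨u0, hu0S, hmin⟩ := (isCompact_sphere (0:E) 1).exists_isMinOn hne hfc.continuousOn
  have hu0norm : ‖u0‖ = 1 := mem_sphere_zero_iff_norm.mp hu0S
  have hu0ne : u0 ≠ 0 := by intro h; rw [h, norm_zero] at hu0norm; norm_num at hu0norm
  refine ⟨∑ j, ∑ k, u0 j * A j k * u0 k, ?_, ?_⟩
  · rw [hquad]
    simpa using hA.dotProduct_mulVec_pos (x := WithLp.ofLp u0) (by simpa using hu0ne)
  intro v
  by_cases hv : (fun j => v j) = (0 : Fin g → ℝ)
  · have hv' : ∀ j, v j = 0 := fun j => congrFun hv j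
    simp [hv']
  have hpos : 0 < ∑ j, v j ^ 2 := by
    obtain ⟨j0, hj0⟩ : ∃ j, v j ≠ 0 := by
      by_contra h
      push_neg at h
      exact hv (funext h)
    exact Finset.sum_pos' (fun j _ => sq_nonneg _)
      ⟨j0, Finset.mem_univ _, by positivity⟩
  set s : ℝ := Real.sqrt (∑ j, v j ^ 2) with hs
  have hspos : 0 < s := Real.sqrt_pos.mpr hpos
  have hs2 : s ^ 2 = ∑ j, v j ^ 2 := Real.sq_sqrt hpos.le
  set u : E := WithLp.toLp 2 (fun j => v j / s) with hu
  have huS : u ∈ Metric.sphere (0:E) 1 := by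
    rw [mem_sphere_zero_iff_norm, EuclideanSpace.norm_eq]
    have : ∑ j, ‖u j‖ ^ 2 = 1 := by
      have : ∑ j, ‖u j‖ ^ 2 = (∑ j, v j ^ 2) / s ^ 2 := by
        rw [Finset.sum_div]
        refine Finset.sum_congr rfl fun j _ => ?_
        rw [Real.norm_eq_abs, _root_.sq_abs]
        show (v j / s) ^ 2 = v j ^ 2 / s ^ 2
        rw [div_pow]
      rw [this, hs2]
      field_simp
    rw [this, Real.sqrt_one]
  have hle := hmin huS
  have hfu : (∑ j, ∑ k, u j * A j k * u k) =
      (∑ j, ∑ k, v j * A j k * v k) / s ^ 2 := by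
    rw [Finset.sum_div]
    refine Finset.sum_congr rfl fun j _ => ?_
    rw [Finset.sum_div]
    refine Finset.sum_congr rfl fun k _ => ?_
    show (v j / s) * A j k * (v k / s) = v j * A j k * v k / s ^ 2
    ring
  simp only [Set.mem_setOf_eq] at hle
  rw [hfu] at hle
  have := mul_le_mul_of_nonneg_right hle (le_of_lt (by positivity : (0:ℝ) < s ^ 2))
  rw [div_mul_cancel₀ _ (by positivity : s ^ 2 ≠ 0)] at this
  calc (∑ j, ∑ k, u0 j * A j k * u0 k) * (∑ j, v j ^ 2)
      = (∑ j, ∑ k, u0 j * A j k * u0 k) * s ^ 2 := by rw [hs2]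
    _ ≤ ∑ j, ∑ k, v j * A j k * v k := this


section Main
open Real in
-- summability of the full (n+1)-dim theta series
lemma aux_theta_summable (g : ℕ) (τ : Matrix (Fin g) (Fin g) ℂ)
    (hτ : SiegelUpper g τ) (w : Fin g → ℂ) (ε' δ' : Fin g → ℤ) :
    Summable (fun N : Fin g → ℤ =>
      Complex.exp (↑Real.pi * I *
        (∑ j, ∑ k, ((N j : ℂ) + (ε' j : ℂ) / 2) * τ j k * ((N k : ℂ) + (ε' k : ℂ) / 2)) +
      2 * ↑Real.pi * I *
        (∑ j, ((N j : ℂ) + (ε' j : ℂ) / 2) * (w j + (δ' j : ℂ) / 2)))) := by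
  obtain ⟨c, hc, hq⟩ := aux_posdef_bound hτ.2
  have hq' : ∀ v : Fin g → ℝ, c * (∑ j, v j ^ 2) ≤ ∑ j, ∑ k, v j * (τ j k).im * v k := by
    intro v
    simpa using hq v
  set C : ℝ := (∑ j, |(w j).im|) + 1 with hCdef
  have hC : ∀ j, |(w j).im| ≤ C := by
    intro j
    have h1 : |(w j).im| ≤ ∑ j, |(w j).im| :=
      Finset.single_le_sum (f := fun j => |(w j).im|) (fun i _ => abs_nonneg _)
        (Finset.mem_univ j)
    linarith
  -- the coordinatewise comparison function
  set fj : Fin g → ℤ → ℝ := fun j m =>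
    Real.exp (-(Real.pi * (c * ((m : ℝ) + (ε' j : ℝ)/2)^2)) +
      2 * Real.pi * (C * |(m : ℝ) + (ε' j : ℝ)/2|)) with hfj
  have hfjsum : ∀ j, Summable (fj j) := by
    intro j
    refine (aux_summable_shift (Real.pi * c) (2 * Real.pi * C) ((ε' j : ℝ)/2)
      (by positivity)).congr fun m => ?_
    rw [hfj]
    congr 1
    ring
  have hbound : ∀ N : Fin g → ℤ,
      ‖Complex.exp (↑Real.pi * I *
        (∑ j, ∑ k, ((N j : ℂ) + (ε' j : ℂ) / 2) * τ j k * ((N k : ℂ) + (ε' k : ℂ) / 2)) +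
      2 * ↑Real.pi * I *
        (∑ j, ((N j : ℂ) + (ε' j : ℂ) / 2) * (w j + (δ' j : ℂ) / 2)))‖ ≤
      ∏ j, fj j (N j) := by
    intro N
    set v : Fin g → ℝ := fun j => (N j : ℝ) + (ε' j : ℝ)/2 with hv
    have hcast : ∀ j, ((N j : ℂ) + (ε' j : ℂ)/2) = ((v j : ℝ) : ℂ) := by
      intro j
      rw [hv]
      push_cast
      ring
    have hδc : ∀ j, ((δ' j : ℂ))/2 = (((δ' j : ℝ)/2 : ℝ) : ℂ) := by
      intro j
      push_cast
      ring
    have hre : (↑Real.pi * I *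
        (∑ j, ∑ k, ((N j : ℂ) + (ε' j : ℂ) / 2) * τ j k * ((N k : ℂ) + (ε' k : ℂ) / 2)) +
      2 * ↑Real.pi * I *
        (∑ j, ((N j : ℂ) + (ε' j : ℂ) / 2) * (w j + (δ' j : ℂ) / 2))).re =
        -(Real.pi * (∑ j, ∑ k, v j * (τ j k).im * v k)) -
          2 * Real.pi * (∑ j, v j * (w j).im) := by
      simp only [hcast, hδc, Complex.add_re, Complex.mul_re, Complex.mul_im,
        Complex.I_re, Complex.I_im, Complex.ofReal_re, Complex.ofReal_im,
        Complex.re_sum, Complex.im_sum, Complex.add_im, Complex.ofReal_mul,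
        Complex.re_ofNat, Complex.im_ofNat,
        mul_zero, zero_mul, add_zero, zero_add, sub_zero, zero_sub, mul_one, one_mul]
      ring
    rw [Complex.norm_exp, hre, ← Real.exp_sum]
    apply Real.exp_le_exp.mpr
    have m1 : Real.pi * (c * ∑ j, v j ^ 2) ≤
        Real.pi * (∑ j, ∑ k, v j * (τ j k).im * v k) :=
      mul_le_mul_of_nonneg_left (hq' v) Real.pi_pos.le
    have h2 : -(∑ j, v j * (w j).im) ≤ ∑ j, C * |v j| := by
      rw [← Finset.sum_neg_distrib]
      refine Finset.sum_le_sum fun j _ => ?_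
      calc -(v j * (w j).im) ≤ |v j * (w j).im| := neg_le_abs _
        _ = |v j| * |(w j).im| := abs_mul _ _
        _ ≤ |v j| * C := mul_le_mul_of_nonneg_left (hC j) (abs_nonneg _)
        _ = C * |v j| := mul_comm _ _
    have m2 : 2 * Real.pi * -(∑ j, v j * (w j).im) ≤
        2 * Real.pi * (∑ j, C * |v j|) :=
      mul_le_mul_of_nonneg_left h2 (by positivity)
    have e1 : ∑ j, (-(Real.pi * (c * v j ^ 2)) + 2 * Real.pi * (C * |v j|)) =
        -(Real.pi * (c * ∑ j, v j ^ 2)) + 2 * Real.pi * (∑ j, C * |v j|) := by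
      rw [Finset.sum_add_distrib]
      congr 1
      · rw [Finset.sum_neg_distrib, ← Finset.mul_sum, ← Finset.mul_sum]
      · rw [← Finset.mul_sum]
    calc -(Real.pi * (∑ j, ∑ k, v j * (τ j k).im * v k)) -
          2 * Real.pi * (∑ j, v j * (w j).im)
        ≤ -(Real.pi * (c * ∑ j, v j ^ 2)) + 2 * Real.pi * (∑ j, C * |v j|) := by
          nlinarith [m1, m2]
      _ = ∑ j, (-(Real.pi * (c * v j ^ 2)) + 2 * Real.pi * (C * |v j|)) := e1.symm
      _ = ∑ j, (fj j (N j)).log := by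
          refine Finset.sum_congr rfl fun j _ => ?_
          rw [hfj, Real.log_exp, hv]
      _ = _ := by
          refine Finset.sum_congr rfl fun j _ => ?_
          rw [hfj, Real.log_exp]
  exact Summable.of_norm_bounded
    (aux_summable_pi g fj hfjsum (fun j m => (Real.exp_pos _).le)) hbound
end Main

/-- Fourier–Jacobi expansion of a theta function with first characteristic entry `ε₁ = 0`,
with respect to the block decomposition `τ = [[t, zᵀ],[z, Z]]`. -/
theorem stmt_2 (n : ℕ) (hn : 1 ≤ n) (τ : Matrix (Fin (n + 1)) (Fin (n + 1)) ℂ)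
    (hτ : SiegelUpper (n + 1) τ)
    (x : ℂ) (b : Fin n → ℂ) (δ₁ : ℤ) (hδ₁ : δ₁ = 0 ∨ δ₁ = 1)
    (ε δ : Fin n → ℤ) (hε : ∀ j, ε j = 0 ∨ ε j = 1) (hδ : ∀ j, δ j = 0 ∨ δ j = 1) :
    Summable (fun N : ℤ =>
      Complex.exp (↑Real.pi * I * (N : ℂ)^2 * τ 0 0 + 2 * ↑Real.pi * I * (N : ℂ) * x) *
        (-1 : ℂ) ^ (N * δ₁) *
        theta n ε δ (Matrix.of fun j k => τ j.succ k.succ)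
          (fun j => b j + (N : ℂ) * τ j.succ 0)) ∧
    theta (n + 1) (Fin.cons 0 ε) (Fin.cons δ₁ δ) τ (Fin.cons x b) =
      ∑' N : ℤ,
        Complex.exp (↑Real.pi * I * (N : ℂ)^2 * τ 0 0 + 2 * ↑Real.pi * I * (N : ℂ) * x) *
          (-1 : ℂ) ^ (N * δ₁) *
          theta n ε δ (Matrix.of fun j k => τ j.succ k.succ)
            (fun j => b j + (N : ℂ) * τ j.succ 0) := by
  set ε' : Fin (n+1) → ℤ := Fin.cons 0 ε with hε'
  set δ' : Fin (n+1) → ℤ := Fin.cons δ₁ δ with hδ'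
  set w : Fin (n+1) → ℂ := Fin.cons x b with hw
  set F : (Fin (n+1) → ℤ) → ℂ := fun N =>
    Complex.exp (↑Real.pi * I *
        (∑ j, ∑ k, ((N j : ℂ) + (ε' j : ℂ) / 2) * τ j k * ((N k : ℂ) + (ε' k : ℂ) / 2)) +
      2 * ↑Real.pi * I *
        (∑ j, ((N j : ℂ) + (ε' j : ℂ) / 2) * (w j + (δ' j : ℂ) / 2))) with hF
  have hFsum : Summable F := aux_theta_summable (n+1) τ hτ w ε' δ'
  have hsymm : ∀ k : Fin n, τ 0 k.succ = τ k.succ 0 := by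
    intro k
    conv_lhs => rw [← hτ.1]
    exact Matrix.transpose_apply τ 0 k.succ
  -- the inner exponent after the Fourier–Jacobi split
  have hexp : ∀ (m : ℤ) (M : Fin n → ℤ), F (Fin.cons m M) =
      Complex.exp (↑Real.pi * I * (m : ℂ)^2 * τ 0 0 + 2 * ↑Real.pi * I * (m : ℂ) * x) *
        (-1 : ℂ) ^ (m * δ₁) *
        Complex.exp (↑Real.pi * I *
          (∑ j, ∑ k, ((M j : ℂ) + (ε j : ℂ) / 2) *
            (Matrix.of fun j k => τ j.succ k.succ) j k * ((M k : ℂ) + (ε k : ℂ) / 2)) +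
        2 * ↑Real.pi * I *
          (∑ j, ((M j : ℂ) + (ε j : ℂ) / 2) *
            ((b j + (m : ℂ) * τ j.succ 0) + (δ j : ℂ) / 2))) := by
    intro m M
    have hneg : (-1 : ℂ) ^ (m * δ₁) =
        Complex.exp (↑Real.pi * I * ((m : ℂ) * (δ₁ : ℂ))) := by
      rw [show (-1 : ℂ) = Complex.exp (↑Real.pi * I) from Complex.exp_pi_mul_I.symm,
        ← Complex.exp_int_mul]
      congr 1
      push_cast
      ring
    rw [hneg, ← Complex.exp_add, ← Complex.exp_add]
    simp only [hF]
    congr 1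
    simp only [hε', hδ', hw, Fin.sum_univ_succ, Fin.cons_zero, Fin.cons_succ,
      Matrix.of_apply, Int.cast_zero, zero_div, add_zero, Finset.sum_add_distrib]
    have hS1 : (∑ k : Fin n, ((m:ℂ)) * τ 0 k.succ * ((M k : ℂ) + (ε k : ℂ)/2)) =
        (m:ℂ) * ∑ k : Fin n, ((M k : ℂ) + (ε k : ℂ)/2) * τ k.succ 0 := by
      rw [Finset.mul_sum]
      refine Finset.sum_congr rfl fun k _ => ?_
      rw [hsymm k]
      ring
    have hS2 : (∑ j : Fin n, ((M j : ℂ) + (ε j : ℂ)/2) * τ j.succ 0 * ((m:ℂ))) =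
        (m:ℂ) * ∑ j : Fin n, ((M j : ℂ) + (ε j : ℂ)/2) * τ j.succ 0 := by
      rw [Finset.mul_sum]
      refine Finset.sum_congr rfl fun j _ => ?_
      ring
    have hS3 : (∑ j : Fin n, ((M j : ℂ) + (ε j : ℂ)/2) *
          ((b j + (m:ℂ) * τ j.succ 0) + (δ j : ℂ)/2)) =
        (∑ j : Fin n, ((M j : ℂ) + (ε j : ℂ)/2) * (b j + (δ j : ℂ)/2)) +
          (m:ℂ) * ∑ j : Fin n, ((M j : ℂ) + (ε j : ℂ)/2) * τ j.succ 0 := by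
      rw [Finset.mul_sum, ← Finset.sum_add_distrib]
      refine Finset.sum_congr rfl fun j _ => ?_
      ring
    rw [hS1, hS2, hS3]
    ring
  have hG : Summable (fun p : ℤ × (Fin n → ℤ) => F (Fin.cons p.1 p.2)) := by
    have h := (Fin.consEquiv (fun _ : Fin (n+1) => ℤ)).summable_iff.mpr hFsum
    exact h.congr fun p => rfl
  have hinner : ∀ m : ℤ, Summable (fun M : Fin n → ℤ => F (Fin.cons m M)) :=
    fun m => hG.prod_factor m
  have htheta : ∀ m : ℤ, theta n ε δ (Matrix.of fun j k => τ j.succ k.succ)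
      (fun j => b j + (m : ℂ) * τ j.succ 0) =
      ∑' M : Fin n → ℤ, Complex.exp (↑Real.pi * I *
          (∑ j, ∑ k, ((M j : ℂ) + (ε j : ℂ) / 2) *
            (Matrix.of fun j k => τ j.succ k.succ) j k * ((M k : ℂ) + (ε k : ℂ) / 2)) +
        2 * ↑Real.pi * I *
          (∑ j, ((M j : ℂ) + (ε j : ℂ) / 2) *
            ((b j + (m : ℂ) * τ j.succ 0) + (δ j : ℂ) / 2))) := by
    intro m
    rw [theta]
  have houter : ∀ m : ℤ, (∑' M : Fin n → ℤ, F (Fin.cons m M)) =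
      Complex.exp (↑Real.pi * I * (m : ℂ)^2 * τ 0 0 + 2 * ↑Real.pi * I * (m : ℂ) * x) *
        (-1 : ℂ) ^ (m * δ₁) *
        theta n ε δ (Matrix.of fun j k => τ j.succ k.succ)
          (fun j => b j + (m : ℂ) * τ j.succ 0) := by
    intro m
    rw [tsum_congr (hexp m), tsum_mul_left, htheta m]
  have hsum1 : Summable (fun m : ℤ => ∑' M : Fin n → ℤ, F (Fin.cons m M)) :=
    (HasSum.prod_fiberwise hG.hasSum (fun m => (hinner m).hasSum)).summable
  constructor
  · exact hsum1.congr fun m => houter m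
  · have h0 : theta (n + 1) ε' δ' τ w = ∑' N : Fin (n+1) → ℤ, F N := by
      rw [theta]
    have h1 : (∑' N : Fin (n+1) → ℤ, F N) =
        ∑' p : ℤ × (Fin n → ℤ), F (Fin.cons p.1 p.2) := by
      rw [← (Fin.consEquiv (fun _ : Fin (n+1) => ℤ)).tsum_eq F]
      exact tsum_congr fun p => rfl
    have h2 : (∑' p : ℤ × (Fin n → ℤ), F (Fin.cons p.1 p.2)) =
        ∑' m : ℤ, ∑' M : Fin n → ℤ, F (Fin.cons m M) := Summable.tsum_prod' hG hinner
    rw [h0, h1, h2]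
    exact tsum_congr houter
end

section
/- Let g ≥ 2 and let τ ∈ ℍ_g be written in block form τ = [[t, zᵀ],[z, Z]] with t ∈ ℂ, z ∈ ℂ^{g−1} and Z a symmetric (g−1)×(g−1) matrix (then Z ∈ ℍ_{g−1}). Then for all x ∈ ℂ, b ∈ ℂ^{g−1}, δ₁ ∈ {0,1} and ε, δ ∈ {0,1}^{g−1}: θ[(1,ε);(δ₁,δ)](τ, (x,b)) = Σ_{N ∈ ℤ} exp(πi (N+1/2)² t + 2πi (N+1/2) x) · i^{(2N+1)δ₁} · θ[ε;δ](Z, b + (N+1/2) z), the series on the right being absolutely convergent. -/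
open Complex Matrix

private lemma quad_lower_bound {g : ℕ} {Y : Matrix (Fin (g+1)) (Fin (g+1)) ℝ} (hY : Y.PosDef) :
    ∃ c > 0, ∀ v : Fin (g+1) → ℝ, c * ∑ j, v j ^ 2 ≤ ∑ j, ∑ k, v j * Y j k * v k := by
  set Q : (Fin (g+1) → ℝ) → ℝ := fun v => ∑ j, ∑ k, v j * Y j k * v k with hQdef
  have hQv : ∀ v, Q v = v ⬝ᵥ Y.mulVec v := by
    intro v
    simp only [Q, dotProduct, Matrix.mulVec, Finset.mul_sum, mul_assoc]
  have hQc : Continuous Q := by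
    apply continuous_finset_sum; intro j _; apply continuous_finset_sum; intro k _
    exact ((continuous_apply j).mul continuous_const).mul (continuous_apply k)
  have hsc : IsCompact (Metric.sphere (0 : Fin (g+1) → ℝ) 1) := isCompact_sphere _ _
  have hsn : (Metric.sphere (0 : Fin (g+1) → ℝ) 1).Nonempty :=
    NormedSpace.sphere_nonempty.mpr zero_le_one
  obtain ⟨u₀, hu₀, hmin⟩ := hsc.exists_isMinOn hsn hQc.continuousOn
  have hu₀n : ‖u₀‖ = 1 := by simpa [mem_sphere_iff_norm] using hu₀
  have hc0 : 0 < Q u₀ := by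
    rw [hQv]
    exact hY.dotProduct_mulVec_pos (x := u₀) (by rintro rfl; simp at hu₀n)
  refine ⟨Q u₀ / (g+1), by positivity, ?_⟩
  intro v
  rcases eq_or_ne v 0 with rfl | hv
  · simp [Q]
  · have hnv : 0 < ‖v‖ := norm_pos_iff.mpr hv
    set u : Fin (g+1) → ℝ := ‖v‖⁻¹ • v with hu
    have hus : u ∈ Metric.sphere (0 : Fin (g+1) → ℝ) 1 := by
      simp [hu, mem_sphere_iff_norm, norm_smul, abs_of_pos (inv_pos.mpr hnv),
        inv_mul_cancel₀ hnv.ne']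
    have hhom : Q u = ‖v‖⁻¹ ^ 2 * Q v := by
      simp only [Q, hu, Pi.smul_apply, smul_eq_mul, Finset.mul_sum]
      refine Finset.sum_congr rfl fun j _ => ?_
      refine Finset.sum_congr rfl fun k _ => by ring
    have h1 : Q u₀ ≤ Q u := hmin hus
    have h2 : ∑ j, v j ^ 2 ≤ (g + 1 : ℝ) * ‖v‖ ^ 2 := by
      calc ∑ j, v j ^ 2 ≤ ∑ _j : Fin (g+1), ‖v‖ ^ 2 := by
            refine Finset.sum_le_sum fun j _ => ?_
            have hj := norm_le_pi_norm v j
            have : |v j| ≤ ‖v‖ := by simpa [Real.norm_eq_abs] using hj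
            nlinarith [abs_nonneg (v j), _root_.sq_abs (v j)]
        _ = (g + 1 : ℝ) * ‖v‖ ^ 2 := by
            simp [Finset.sum_const, Finset.card_univ]
    have h1' : Q u₀ ≤ ‖v‖⁻¹ ^ 2 * Q v := hhom ▸ h1
    have hn2 : (0:ℝ) < ‖v‖ ^ 2 := by positivity
    have h3 : Q u₀ * ‖v‖ ^ 2 ≤ Q v := by
      have := mul_le_mul_of_nonneg_right h1' hn2.le
      calc Q u₀ * ‖v‖ ^ 2 ≤ ‖v‖⁻¹ ^ 2 * Q v * ‖v‖ ^ 2 := this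
        _ = Q v := by field_simp
    have hg1 : (0:ℝ) < (g+1:ℝ) := by positivity
    calc Q u₀ / (g+1) * ∑ j, v j ^ 2 ≤ Q u₀ / (g+1) * ((g+1) * ‖v‖^2) := by
          exact mul_le_mul_of_nonneg_left h2 (by positivity)
      _ = Q u₀ * ‖v‖ ^ 2 := by field_simp
      _ ≤ Q v := h3



private lemma summable_gauss_int (A B : ℝ) (hA : 0 < A) :
    Summable fun m : ℤ => Real.exp (-A * (m : ℝ) ^ 2 + B * m) := by
  have hπ := Real.pi_pos
  set τ : ℂ := (A / Real.pi : ℝ) * I with hτ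
  set z : ℂ := (-B / (2 * Real.pi) : ℝ) * I with hz
  have hτim : 0 < τ.im := by simp [hτ]; positivity
  have h := (summable_jacobiTheta₂_term_iff z τ).mpr hτim
  have hnorm := summable_norm_iff.mpr h
  refine hnorm.congr fun m => ?_
  rw [norm_jacobiTheta₂_term]
  have hτi : τ.im = A / Real.pi := by rw [hτ, Complex.mul_I_im, Complex.ofReal_re]
  have hzi : z.im = -B / (2 * Real.pi) := by rw [hz, Complex.mul_I_im, Complex.ofReal_re]
  rw [hτi, hzi]
  congr 1
  field_simp
  ring

private lemma summable_exp_quad (A B : ℝ) (hA : 0 < A) (a : ℝ) :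
    Summable fun m : ℤ => Real.exp (-A * ((m : ℝ) + a) ^ 2 + B * |(m : ℝ) + a|) := by
  have h := (summable_gauss_int (A/2) (-(A*a)) (by linarith)).mul_left
    (Real.exp (B ^ 2 / (2*A) - A/2 * a ^ 2))
  refine Summable.of_nonneg_of_le (fun m => (Real.exp_pos _).le) (fun m => ?_) h
  rw [← Real.exp_add]
  apply Real.exp_le_exp.mpr
  set D := B ^ 2 / (2*A) with hD
  have h2 : (0:ℝ) < 2 * A := by linarith
  have key : B * |(m:ℝ) + a| ≤ A/2 * ((m:ℝ)+a)^2 + D := by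
    rw [← mul_le_mul_iff_right₀ h2, hD]
    have hBD : 2 * A * (A / 2 * ((m:ℝ)+a) ^ 2 + B ^ 2 / (2 * A)) =
        A ^ 2 * ((m:ℝ)+a) ^ 2 + B ^ 2 := by field_simp
    rw [hBD]
    nlinarith [sq_nonneg (A * |(m:ℝ)+a| - B), _root_.sq_abs ((m:ℝ)+a)]
  nlinarith [key, sq_nonneg ((m:ℝ) + a)]



private def consEquivZ (n : ℕ) : ℤ × (Fin n → ℤ) ≃ (Fin (n + 1) → ℤ) where
  toFun p := Fin.cons p.1 p.2
  invFun N := (N 0, fun j => N j.succ)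
  left_inv p := by simp
  right_inv N := by
    funext j
    refine Fin.cases ?_ (fun i => ?_) j <;> simp

private lemma summable_pi_prod {g : ℕ} (f : Fin g → ℤ → ℝ) (hf : ∀ j, Summable (f j))
    (h0 : ∀ j m, 0 ≤ f j m) :
    Summable fun N : Fin g → ℤ => ∏ j, f j (N j) := by
  induction g with
  | zero =>
    have : Finite (Fin 0 → ℤ) := by
      have : IsEmpty (Fin 0) := by infer_instance
      infer_instance
    exact Summable.of_finite
  | succ g ih =>
    have h2 := ih (fun j => f j.succ) (fun j => hf _) (fun j m => h0 _ _)
    have hm := Summable.mul_of_nonneg (hf 0) h2 (fun m => h0 0 m)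
      (fun N => Finset.prod_nonneg fun j _ => h0 _ _)
    refine ((consEquivZ g).summable_iff
      (f := fun N : Fin (g+1) → ℤ => ∏ j, f j (N j))).mp ?_
    refine hm.congr fun p => ?_
    simp [consEquivZ, Function.comp, Fin.prod_univ_succ]



private lemma re_helper (r : ℝ) (Q : ℂ) : ((r : ℂ) * I * Q).re = -(r * Q.im) := by
  simp [Complex.mul_re, Complex.mul_im]

private lemma re_helper2 (r : ℝ) (Q : ℂ) : (2 * (r : ℂ) * I * Q).re = -(2 * r * Q.im) := by
  simp [Complex.mul_re, Complex.mul_im]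

private lemma im_helper (a b : ℝ) (z : ℂ) : ((a : ℂ) * z * (b : ℂ)).im = a * z.im * b := by
  simp [Complex.mul_im]

private lemma summable_theta_term {g : ℕ} (τ : Matrix (Fin (g+1)) (Fin (g+1)) ℂ)
    (hτ : SiegelUpper (g+1) τ) (e : Fin (g+1) → ℤ) (w : Fin (g+1) → ℂ) :
    Summable fun N : Fin (g+1) → ℤ =>
      Complex.exp (↑Real.pi * I *
          (∑ j, ∑ k, ((N j : ℂ) + (e j : ℂ) / 2) * τ j k * ((N k : ℂ) + (e k : ℂ) / 2)) +
        2 * ↑Real.pi * I * (∑ j, ((N j : ℂ) + (e j : ℂ) / 2) * w j)) := by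
  obtain ⟨c, hc, hquad⟩ := quad_lower_bound hτ.2
  simp only [Matrix.of_apply] at hquad
  have hπ := Real.pi_pos
  set u : (Fin (g+1) → ℤ) → Fin (g+1) → ℝ := fun N j => (N j : ℝ) + (e j : ℝ) / 2 with hu
  have hcast : ∀ (N : Fin (g+1) → ℤ) j, ((N j : ℂ) + (e j : ℂ) / 2) = ((u N j : ℝ) : ℂ) := by
    intro N j
    simp only [hu]
    push_cast
    ring
  rw [← summable_norm_iff]
  have key : ∀ N : Fin (g+1) → ℤ,
      ‖Complex.exp (↑Real.pi * I *
          (∑ j, ∑ k, ((N j : ℂ) + (e j : ℂ) / 2) * τ j k * ((N k : ℂ) + (e k : ℂ) / 2)) +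
        2 * ↑Real.pi * I * (∑ j, ((N j : ℂ) + (e j : ℂ) / 2) * w j))‖ =
      Real.exp (-(Real.pi * (∑ j, ∑ k, u N j * (τ j k).im * u N k))
        - 2 * Real.pi * (∑ j, u N j * (w j).im)) := by
    intro N
    rw [Complex.norm_exp]
    congr 1
    rw [Complex.add_re, re_helper, re_helper2]
    have hQim : (∑ j, ∑ k, ((N j : ℂ) + (e j : ℂ) / 2) * τ j k *
        ((N k : ℂ) + (e k : ℂ) / 2)).im = ∑ j, ∑ k, u N j * (τ j k).im * u N k := by
      rw [Complex.im_sum]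
      refine Finset.sum_congr rfl fun j _ => ?_
      rw [Complex.im_sum]
      refine Finset.sum_congr rfl fun k _ => ?_
      rw [hcast N j, hcast N k, im_helper]
    have hLim : (∑ j, ((N j : ℂ) + (e j : ℂ) / 2) * w j).im = ∑ j, u N j * (w j).im := by
      rw [Complex.im_sum]
      refine Finset.sum_congr rfl fun j _ => ?_
      rw [hcast N j]
      simp [Complex.mul_im]
    rw [hQim, hLim]
    ring
  set gf : Fin (g+1) → ℤ → ℝ := fun j m =>
    Real.exp (-(Real.pi * c) * ((m : ℝ) + (e j : ℝ) / 2) ^ 2 +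
      (2 * Real.pi * |(w j).im|) * |(m : ℝ) + (e j : ℝ) / 2|) with hgf
  have hgsum : Summable fun N : Fin (g+1) → ℤ => ∏ j, gf j (N j) := by
    refine summable_pi_prod gf (fun j => ?_) (fun j m => (Real.exp_pos _).le)
    exact summable_exp_quad (Real.pi * c) (2 * Real.pi * |(w j).im|) (by positivity) _
  refine Summable.of_nonneg_of_le (fun N => norm_nonneg _) (fun N => ?_) hgsum
  rw [key N]
  have hprod : ∏ j, gf j (N j) = Real.exp (∑ j, (-(Real.pi * c) * (u N j) ^ 2 +
      (2 * Real.pi * |(w j).im|) * |u N j|)) := by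
    rw [Real.exp_sum]
  rw [hprod]
  apply Real.exp_le_exp.mpr
  have hsplit : ∑ j, (-(Real.pi * c) * (u N j) ^ 2 + (2 * Real.pi * |(w j).im|) * |u N j|) =
      -(Real.pi * c) * (∑ j, (u N j) ^ 2) + 2 * Real.pi * (∑ j, |(w j).im| * |u N j|) := by
    rw [Finset.sum_add_distrib, ← Finset.mul_sum]
    congr 1
    rw [Finset.mul_sum]
    exact Finset.sum_congr rfl fun j _ => by ring
  rw [hsplit]
  have e1 : Real.pi * (c * ∑ j, (u N j) ^ 2) ≤
      Real.pi * (∑ j, ∑ k, u N j * (τ j k).im * u N k) :=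
    mul_le_mul_of_nonneg_left (hquad (u N)) hπ.le
  have e2 : -(∑ j, |(w j).im| * |u N j|) ≤ ∑ j, u N j * (w j).im := by
    rw [← Finset.sum_neg_distrib]
    refine Finset.sum_le_sum fun j _ => ?_
    have h3 := neg_abs_le (u N j * (w j).im)
    rw [abs_mul] at h3
    nlinarith [h3]
  nlinarith [e1, e2, hπ]



private lemma I_zpow (k : ℤ) : (I : ℂ) ^ k = Complex.exp (↑Real.pi * I * (k : ℂ) / 2) := by
  have h1 : Complex.exp (↑Real.pi * I / 2) = I := by
    have h2 : (↑Real.pi * I / 2 : ℂ) = ((Real.pi / 2 : ℝ) : ℂ) * I := by push_cast; ring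
    rw [h2, Complex.exp_mul_I, ← Complex.ofReal_cos, ← Complex.ofReal_sin,
      Real.cos_pi_div_two, Real.sin_pi_div_two]
    simp
  rw [show (↑Real.pi * I * (k : ℂ) / 2 : ℂ) = (k : ℂ) * (↑Real.pi * I / 2) by ring,
    Complex.exp_int_mul, h1]

private lemma term_split {n : ℕ} (τ : Matrix (Fin (n+1)) (Fin (n+1)) ℂ)
    (hsym : ∀ k : Fin n, τ 0 k.succ = τ k.succ 0)
    (x : ℂ) (b : Fin n → ℂ) (δ₁ : ℤ) (ε δ : Fin n → ℤ) (m : ℤ) (N' : Fin n → ℤ) :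
    Complex.exp (↑Real.pi * I *
        (∑ j, ∑ k, (((Fin.cons m N' : Fin (n+1) → ℤ) j : ℂ) + ((Fin.cons 1 ε : Fin (n+1) → ℤ) j : ℂ) / 2) * τ j k *
          (((Fin.cons m N' : Fin (n+1) → ℤ) k : ℂ) + ((Fin.cons 1 ε : Fin (n+1) → ℤ) k : ℂ) / 2)) +
      2 * ↑Real.pi * I *
        (∑ j, (((Fin.cons m N' : Fin (n+1) → ℤ) j : ℂ) + ((Fin.cons 1 ε : Fin (n+1) → ℤ) j : ℂ) / 2) *
          (((Fin.cons x b : Fin (n+1) → ℂ) j) + ((Fin.cons δ₁ δ : Fin (n+1) → ℤ) j : ℂ) / 2))) =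
    Complex.exp (↑Real.pi * I * ((m : ℂ) + 1 / 2) ^ 2 * τ 0 0 +
        2 * ↑Real.pi * I * ((m : ℂ) + 1 / 2) * x) *
      I ^ ((2 * m + 1) * δ₁) *
      Complex.exp (↑Real.pi * I *
          (∑ j, ∑ k, ((N' j : ℂ) + (ε j : ℂ) / 2) *
            Matrix.of (fun j k => τ j.succ k.succ) j k * ((N' k : ℂ) + (ε k : ℂ) / 2)) +
        2 * ↑Real.pi * I *
          (∑ j, ((N' j : ℂ) + (ε j : ℂ) / 2) *
            ((b j + ((m : ℂ) + 1 / 2) * τ j.succ 0) + (δ j : ℂ) / 2))) := by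
  rw [I_zpow, ← Complex.exp_add, ← Complex.exp_add]
  congr 1
  simp only [Matrix.of_apply, Fin.sum_univ_succ, Fin.cons_zero, Fin.cons_succ, Int.cast_one]
  simp only [hsym]
  have e1 : ∑ k : Fin n, ((m : ℂ) + 1 / 2) * τ k.succ 0 * ((N' k : ℂ) + (ε k : ℂ) / 2)
      = ((m : ℂ) + 1 / 2) * ∑ k : Fin n, ((N' k : ℂ) + (ε k : ℂ) / 2) * τ k.succ 0 := by
    rw [Finset.mul_sum]
    exact Finset.sum_congr rfl fun k _ => by ring
  have e2 : ∑ j : Fin n, (((N' j : ℂ) + (ε j : ℂ) / 2) * τ j.succ 0 * ((m : ℂ) + 1 / 2) +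
        ∑ k : Fin n, ((N' j : ℂ) + (ε j : ℂ) / 2) * τ j.succ k.succ * ((N' k : ℂ) + (ε k : ℂ) / 2))
      = ((m : ℂ) + 1 / 2) * (∑ k : Fin n, ((N' k : ℂ) + (ε k : ℂ) / 2) * τ k.succ 0) +
        ∑ j : Fin n, ∑ k : Fin n,
          ((N' j : ℂ) + (ε j : ℂ) / 2) * τ j.succ k.succ * ((N' k : ℂ) + (ε k : ℂ) / 2) := by
    rw [Finset.sum_add_distrib]
    congr 1
    rw [Finset.mul_sum]
    exact Finset.sum_congr rfl fun j _ => by ring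
  have e3 : ∑ j : Fin n, ((N' j : ℂ) + (ε j : ℂ) / 2) *
        (b j + ((m : ℂ) + 1 / 2) * τ j.succ 0 + (δ j : ℂ) / 2)
      = (∑ j : Fin n, ((N' j : ℂ) + (ε j : ℂ) / 2) * (b j + (δ j : ℂ) / 2)) +
        ((m : ℂ) + 1 / 2) * ∑ k : Fin n, ((N' k : ℂ) + (ε k : ℂ) / 2) * τ k.succ 0 := by
    rw [show ∑ j : Fin n, ((N' j : ℂ) + (ε j : ℂ) / 2) *
        (b j + ((m : ℂ) + 1 / 2) * τ j.succ 0 + (δ j : ℂ) / 2)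
      = ∑ j : Fin n, (((N' j : ℂ) + (ε j : ℂ) / 2) * (b j + (δ j : ℂ) / 2) +
          ((m : ℂ) + 1 / 2) * (((N' j : ℂ) + (ε j : ℂ) / 2) * τ j.succ 0)) from
      Finset.sum_congr rfl fun j _ => by ring]
    rw [Finset.sum_add_distrib, ← Finset.mul_sum]
  rw [e1, e2, e3]
  push_cast
  ring


/-- Fourier–Jacobi expansion of a theta function with first characteristic entry `ε₁ = 1`,
with respect to the block decomposition `τ = [[t, zᵀ],[z, Z]]`. -/
theorem stmt_3 (n : ℕ) (hn : 1 ≤ n) (τ : Matrix (Fin (n + 1)) (Fin (n + 1)) ℂ)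
    (hτ : SiegelUpper (n + 1) τ)
    (x : ℂ) (b : Fin n → ℂ) (δ₁ : ℤ) (hδ₁ : δ₁ = 0 ∨ δ₁ = 1)
    (ε δ : Fin n → ℤ) (hε : ∀ j, ε j = 0 ∨ ε j = 1) (hδ : ∀ j, δ j = 0 ∨ δ j = 1) :
    Summable (fun N : ℤ =>
      Complex.exp (↑Real.pi * I * ((N : ℂ) + 1/2)^2 * τ 0 0 +
          2 * ↑Real.pi * I * ((N : ℂ) + 1/2) * x) *
        I ^ ((2 * N + 1) * δ₁) *
        theta n ε δ (Matrix.of fun j k => τ j.succ k.succ)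
          (fun j => b j + ((N : ℂ) + 1/2) * τ j.succ 0)) ∧
    theta (n + 1) (Fin.cons 1 ε) (Fin.cons δ₁ δ) τ (Fin.cons x b) =
      ∑' N : ℤ,
        Complex.exp (↑Real.pi * I * ((N : ℂ) + 1/2)^2 * τ 0 0 +
            2 * ↑Real.pi * I * ((N : ℂ) + 1/2) * x) *
          I ^ ((2 * N + 1) * δ₁) *
          theta n ε δ (Matrix.of fun j k => τ j.succ k.succ)
            (fun j => b j + ((N : ℂ) + 1/2) * τ j.succ 0) := by
  have hsym : ∀ k : Fin n, τ 0 k.succ = τ k.succ 0 := fun k => hτ.1.apply k.succ 0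
  have hFsum : Summable (fun N : Fin (n+1) → ℤ => Complex.exp (↑Real.pi * I * (∑ j, ∑ k, ((N j : ℂ) + ((Fin.cons 1 ε : Fin (n+1) → ℤ) j : ℂ) / 2) * τ j k * ((N k : ℂ) + ((Fin.cons 1 ε : Fin (n+1) → ℤ) k : ℂ) / 2)) + 2 * ↑Real.pi * I * (∑ j, ((N j : ℂ) + ((Fin.cons 1 ε : Fin (n+1) → ℤ) j : ℂ) / 2) * ((Fin.cons x b : Fin (n+1) → ℂ) j + ((Fin.cons δ₁ δ : Fin (n+1) → ℤ) j : ℂ) / 2)))) :=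
    summable_theta_term τ hτ (Fin.cons 1 ε)
      (fun j => (Fin.cons x b : Fin (n+1) → ℂ) j + ((Fin.cons δ₁ δ : Fin (n+1) → ℤ) j : ℂ) / 2)
  have hθtop : theta (n + 1) (Fin.cons 1 ε) (Fin.cons δ₁ δ) τ (Fin.cons x b) =
      ∑' N : Fin (n+1) → ℤ, (fun N : Fin (n+1) → ℤ => Complex.exp (↑Real.pi * I * (∑ j, ∑ k, ((N j : ℂ) + ((Fin.cons 1 ε : Fin (n+1) → ℤ) j : ℂ) / 2) * τ j k * ((N k : ℂ) + ((Fin.cons 1 ε : Fin (n+1) → ℤ) k : ℂ) / 2)) + 2 * ↑Real.pi * I * (∑ j, ((N j : ℂ) + ((Fin.cons 1 ε : Fin (n+1) → ℤ) j : ℂ) / 2) * ((Fin.cons x b : Fin (n+1) → ℂ) j + ((Fin.cons δ₁ δ : Fin (n+1) → ℤ) j : ℂ) / 2)))) N := rfl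
  have hcomp : Summable ((fun N : Fin (n+1) → ℤ => Complex.exp (↑Real.pi * I * (∑ j, ∑ k, ((N j : ℂ) + ((Fin.cons 1 ε : Fin (n+1) → ℤ) j : ℂ) / 2) * τ j k * ((N k : ℂ) + ((Fin.cons 1 ε : Fin (n+1) → ℤ) k : ℂ) / 2)) + 2 * ↑Real.pi * I * (∑ j, ((N j : ℂ) + ((Fin.cons 1 ε : Fin (n+1) → ℤ) j : ℂ) / 2) * ((Fin.cons x b : Fin (n+1) → ℂ) j + ((Fin.cons δ₁ δ : Fin (n+1) → ℤ) j : ℂ) / 2)))) ∘ (consEquivZ n)) := (consEquivZ n).summable_iff.mpr hFsum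
  have hprod : Summable (fun p : ℤ × (Fin n → ℤ) => (fun m : ℤ => Complex.exp (↑Real.pi * I * ((m : ℂ) + 1/2)^2 * τ 0 0 + 2 * ↑Real.pi * I * ((m : ℂ) + 1/2) * x) * I ^ ((2 * m + 1) * δ₁)) p.1 * (fun (m : ℤ) (N' : Fin n → ℤ) => Complex.exp (↑Real.pi * I * (∑ j, ∑ k, ((N' j : ℂ) + (ε j : ℂ) / 2) * Matrix.of (fun j k => τ j.succ k.succ) j k * ((N' k : ℂ) + (ε k : ℂ) / 2)) + 2 * ↑Real.pi * I * (∑ j, ((N' j : ℂ) + (ε j : ℂ) / 2) * ((fun j => b j + ((m : ℂ) + 1/2) * τ j.succ 0) j + (δ j : ℂ) / 2)))) p.1 p.2) :=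
    hcomp.congr fun p => term_split τ hsym x b δ₁ ε δ p.1 p.2
  have hinner : ∀ m : ℤ, HasSum (fun N' : Fin n → ℤ => (fun m : ℤ => Complex.exp (↑Real.pi * I * ((m : ℂ) + 1/2)^2 * τ 0 0 + 2 * ↑Real.pi * I * ((m : ℂ) + 1/2) * x) * I ^ ((2 * m + 1) * δ₁)) m * (fun (m : ℤ) (N' : Fin n → ℤ) => Complex.exp (↑Real.pi * I * (∑ j, ∑ k, ((N' j : ℂ) + (ε j : ℂ) / 2) * Matrix.of (fun j k => τ j.succ k.succ) j k * ((N' k : ℂ) + (ε k : ℂ) / 2)) + 2 * ↑Real.pi * I * (∑ j, ((N' j : ℂ) + (ε j : ℂ) / 2) * ((fun j => b j + ((m : ℂ) + 1/2) * τ j.succ 0) j + (δ j : ℂ) / 2)))) m N')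
      ((fun m : ℤ => (fun m : ℤ => Complex.exp (↑Real.pi * I * ((m : ℂ) + 1/2)^2 * τ 0 0 + 2 * ↑Real.pi * I * ((m : ℂ) + 1/2) * x) * I ^ ((2 * m + 1) * δ₁)) m * theta n ε δ (Matrix.of fun j k => τ j.succ k.succ) (fun j => b j + ((m : ℂ) + 1/2) * τ j.succ 0)) m) := by
    intro m
    have h0 : theta n ε δ (Matrix.of fun j k => τ j.succ k.succ)
        (fun j => b j + ((m : ℂ) + 1/2) * τ j.succ 0) = ∑' N' : Fin n → ℤ, (fun (m : ℤ) (N' : Fin n → ℤ) => Complex.exp (↑Real.pi * I * (∑ j, ∑ k, ((N' j : ℂ) + (ε j : ℂ) / 2) * Matrix.of (fun j k => τ j.succ k.succ) j k * ((N' k : ℂ) + (ε k : ℂ) / 2)) + 2 * ↑Real.pi * I * (∑ j, ((N' j : ℂ) + (ε j : ℂ) / 2) * ((fun j => b j + ((m : ℂ) + 1/2) * τ j.succ 0) j + (δ j : ℂ) / 2)))) m N' := rfl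
    have h1 : (fun m : ℤ => (fun m : ℤ => Complex.exp (↑Real.pi * I * ((m : ℂ) + 1/2)^2 * τ 0 0 + 2 * ↑Real.pi * I * ((m : ℂ) + 1/2) * x) * I ^ ((2 * m + 1) * δ₁)) m * theta n ε δ (Matrix.of fun j k => τ j.succ k.succ) (fun j => b j + ((m : ℂ) + 1/2) * τ j.succ 0)) m = ∑' N' : Fin n → ℤ, (fun m : ℤ => Complex.exp (↑Real.pi * I * ((m : ℂ) + 1/2)^2 * τ 0 0 + 2 * ↑Real.pi * I * ((m : ℂ) + 1/2) * x) * I ^ ((2 * m + 1) * δ₁)) m * (fun (m : ℤ) (N' : Fin n → ℤ) => Complex.exp (↑Real.pi * I * (∑ j, ∑ k, ((N' j : ℂ) + (ε j : ℂ) / 2) * Matrix.of (fun j k => τ j.succ k.succ) j k * ((N' k : ℂ) + (ε k : ℂ) / 2)) + 2 * ↑Real.pi * I * (∑ j, ((N' j : ℂ) + (ε j : ℂ) / 2) * ((fun j => b j + ((m : ℂ) + 1/2) * τ j.succ 0) j + (δ j : ℂ) / 2)))) m N' := by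
      rw [tsum_mul_left]
      exact congrArg _ h0
    rw [h1]
    exact (hprod.prod_factor m).hasSum
  have hmain : HasSum (fun m : ℤ => (fun m : ℤ => Complex.exp (↑Real.pi * I * ((m : ℂ) + 1/2)^2 * τ 0 0 + 2 * ↑Real.pi * I * ((m : ℂ) + 1/2) * x) * I ^ ((2 * m + 1) * δ₁)) m * theta n ε δ (Matrix.of fun j k => τ j.succ k.succ) (fun j => b j + ((m : ℂ) + 1/2) * τ j.succ 0))
      (∑' p : ℤ × (Fin n → ℤ), (fun m : ℤ => Complex.exp (↑Real.pi * I * ((m : ℂ) + 1/2)^2 * τ 0 0 + 2 * ↑Real.pi * I * ((m : ℂ) + 1/2) * x) * I ^ ((2 * m + 1) * δ₁)) p.1 * (fun (m : ℤ) (N' : Fin n → ℤ) => Complex.exp (↑Real.pi * I * (∑ j, ∑ k, ((N' j : ℂ) + (ε j : ℂ) / 2) * Matrix.of (fun j k => τ j.succ k.succ) j k * ((N' k : ℂ) + (ε k : ℂ) / 2)) + 2 * ↑Real.pi * I * (∑ j, ((N' j : ℂ) + (ε j : ℂ) / 2) * ((fun j => b j + ((m : ℂ) + 1/2) * τ j.succ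 0) j + (δ j : ℂ) / 2)))) p.1 p.2) :=
    HasSum.prod_fiberwise hprod.hasSum hinner
  constructor
  · exact hmain.summable
  · calc theta (n + 1) (Fin.cons 1 ε) (Fin.cons δ₁ δ) τ (Fin.cons x b)
        = ∑' N : Fin (n+1) → ℤ, (fun N : Fin (n+1) → ℤ => Complex.exp (↑Real.pi * I * (∑ j, ∑ k, ((N j : ℂ) + ((Fin.cons 1 ε : Fin (n+1) → ℤ) j : ℂ) / 2) * τ j k * ((N k : ℂ) + ((Fin.cons 1 ε : Fin (n+1) → ℤ) k : ℂ) / 2)) + 2 * ↑Real.pi * I * (∑ j, ((N j : ℂ) + ((Fin.cons 1 ε : Fin (n+1) → ℤ) j : ℂ) / 2) * ((Fin.cons x b : Fin (n+1) → ℂ) j + ((Fin.cons δ₁ δ : Fin (n+1) → ℤ) j : ℂ) / 2)))) N := hθtop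
      _ = ∑' p : ℤ × (Fin n → ℤ), (fun N : Fin (n+1) → ℤ => Complex.exp (↑Real.pi * I * (∑ j, ∑ k, ((N j : ℂ) + ((Fin.cons 1 ε : Fin (n+1) → ℤ) j : ℂ) / 2) * τ j k * ((N k : ℂ) + ((Fin.cons 1 ε : Fin (n+1) → ℤ) k : ℂ) / 2)) + 2 * ↑Real.pi * I * (∑ j, ((N j : ℂ) + ((Fin.cons 1 ε : Fin (n+1) → ℤ) j : ℂ) / 2) * ((Fin.cons x b : Fin (n+1) → ℂ) j + ((Fin.cons δ₁ δ : Fin (n+1) → ℤ) j : ℂ) / 2)))) ((consEquivZ n) p) := ((consEquivZ n).tsum_eq _).symm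
      _ = ∑' p : ℤ × (Fin n → ℤ), (fun m : ℤ => Complex.exp (↑Real.pi * I * ((m : ℂ) + 1/2)^2 * τ 0 0 + 2 * ↑Real.pi * I * ((m : ℂ) + 1/2) * x) * I ^ ((2 * m + 1) * δ₁)) p.1 * (fun (m : ℤ) (N' : Fin n → ℤ) => Complex.exp (↑Real.pi * I * (∑ j, ∑ k, ((N' j : ℂ) + (ε j : ℂ) / 2) * Matrix.of (fun j k => τ j.succ k.succ) j k * ((N' k : ℂ) + (ε k : ℂ) / 2)) + 2 * ↑Real.pi * I * (∑ j, ((N' j : ℂ) + (ε j : ℂ) / 2) * ((fun j => b j + ((m : ℂ) + 1/2) * τ j.succ 0) j + (δ j : ℂ) / 2)))) p.1 p.2 :=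
        tsum_congr fun p => term_split τ hsym x b δ₁ ε δ p.1 p.2
      _ = ∑' m : ℤ, (fun m : ℤ => (fun m : ℤ => Complex.exp (↑Real.pi * I * ((m : ℂ) + 1/2)^2 * τ 0 0 + 2 * ↑Real.pi * I * ((m : ℂ) + 1/2) * x) * I ^ ((2 * m + 1) * δ₁)) m * theta n ε δ (Matrix.of fun j k => τ j.succ k.succ) (fun j => b j + ((m : ℂ) + 1/2) * τ j.succ 0)) m := hmain.tsum_eq.symm
end

section
/- Let E be the real symmetric matrix with rows ((2,−1,0),(−1,2,0),(0,0,1)) (a matrix in the interior of the cone σ_{K₃+1} spanned by the quadratic forms x₁², x₂², (x₁−x₂)², x₃²). Fix a complex symmetric 3×3 matrix R and set τ(y) := iyE + R; then τ(y) ∈ ℍ₃ for all sufficiently large y > 0. Set S₁ := e^{2πiR₁₃} and S₂ := e^{2πiR₂₃}. Then the limit lim_{y→∞} e^{16πy} · θ_null(τ(y)) exists, and it equals zero if and only if (S₁ − 1)(S₂ − 1)(S₁S₂ − 1) = 0. -/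
open Complex Matrix
set_option maxHeartbeats 1000000
open Filter Topology


/-- The genus-3 theta-null: the product of all theta constants with even characteristic. -/
noncomputable def thetaNull3 (τ : Matrix (Fin 3) (Fin 3) ℂ) : ℂ :=
  ∏ c ∈ Finset.univ.filter
      (fun c : (Fin 3 → Fin 2) × (Fin 3 → Fin 2) =>
        (∑ j, (c.1 j).val * (c.2 j).val) % 2 = 0),
    theta 3 (fun j => ((c.1 j).val : ℤ)) (fun j => ((c.2 j).val : ℤ)) τ 0

/-- The matrix generating the interior of the cone `σ_{K₃+1}`. -/
noncomputable def EK31 : Matrix (Fin 3) (Fin 3) ℂ := !![2, -1, 0; -1, 2, 0; 0, 0, 1]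

namespace ST9

lemma gauss_nat (b : ℝ) (hb : 0 < b) : Summable (fun n : ℕ => Real.exp (-b * (n:ℝ)^2)) := by
  refine Summable.of_nonneg_of_le (fun n => (Real.exp_pos _).le) (fun n => ?_)
    (summable_geometric_of_lt_one (Real.exp_pos (-b)).le (Real.exp_lt_one_iff.2 (by linarith)))
  rw [← Real.exp_nat_mul]
  apply Real.exp_le_exp.2
  have h : (n:ℝ) ≤ (n:ℝ)^2 := by exact_mod_cast Nat.cast_le.2 (Nat.le_self_pow two_ne_zero n)
  nlinarith

lemma gauss1 (b : ℝ) (hb : 0 < b) : Summable (fun n : ℤ => Real.exp (-b * (n:ℝ)^2)) := by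
  apply Summable.of_nat_of_neg <;> simpa using gauss_nat b hb

def e3 : (Fin 3 → ℤ) ≃ ℤ × ℤ × ℤ where
  toFun N := (N 0, N 1, N 2)
  invFun p := ![p.1, p.2.1, p.2.2]
  left_inv N := by funext i; fin_cases i <;> rfl
  right_inv p := rfl

lemma gauss3 (b : ℝ) (hb : 0 < b) :
    Summable (fun N : Fin 3 → ℤ => Real.exp (-b * ((N 0:ℝ)^2 + (N 1:ℝ)^2 + (N 2:ℝ)^2))) := by
  have h1 : Summable (fun p : ℤ × ℤ × ℤ => Real.exp (-b * (p.1:ℝ)^2) *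
      (Real.exp (-b * (p.2.1:ℝ)^2) * Real.exp (-b * (p.2.2:ℝ)^2))) :=
    Summable.mul_of_nonneg (gauss1 b hb)
      (Summable.mul_of_nonneg (gauss1 b hb) (gauss1 b hb) (fun _ => (Real.exp_pos _).le)
        (fun _ => (Real.exp_pos _).le))
      (fun _ => (Real.exp_pos _).le) (fun _ => mul_nonneg (Real.exp_pos _).le (Real.exp_pos _).le)
  rw [← (e3.symm).summable_iff]
  refine h1.congr fun p => ?_
  show _ = Real.exp (-b * ((e3.symm p 0:ℝ)^2 + (e3.symm p 1:ℝ)^2 + (e3.symm p 2:ℝ)^2))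
  rw [← Real.exp_add, ← Real.exp_add]
  show _ = Real.exp (-b * ((p.1:ℝ)^2 + (p.2.1:ℝ)^2 + (p.2.2:ℝ)^2))
  ring_nf


noncomputable def tau (R : Matrix (Fin 3) (Fin 3) ℂ) (y : ℝ) : Matrix (Fin 3) (Fin 3) ℂ :=
  (I * (y : ℂ)) • EK31 + R

noncomputable def w (ε : Fin 3 → Fin 2) (N : Fin 3 → ℤ) (j : Fin 3) : ℝ :=
  (N j : ℝ) + ((ε j).val : ℝ)/2

noncomputable def Qv (ε : Fin 3 → Fin 2) (N : Fin 3 → ℤ) : ℝ :=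
  2*(w ε N 0)^2 - 2*(w ε N 0)*(w ε N 1) + 2*(w ε N 1)^2 + (w ε N 2)^2

noncomputable def pha (R : Matrix (Fin 3) (Fin 3) ℂ) (ε δ : Fin 3 → Fin 2)
    (N : Fin 3 → ℤ) : ℂ :=
  Complex.exp (↑Real.pi * I * (∑ j, ∑ k, (w ε N j : ℂ) * R j k * (w ε N k : ℂ))
    + ↑Real.pi * I * (∑ j, (w ε N j : ℂ) * ((δ j).val : ℂ)))

lemma sq_le_Q (ε : Fin 3 → Fin 2) (N : Fin 3 → ℤ) (j : Fin 3) :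
    (w ε N j)^2 ≤ Qv ε N := by
  have h2 : (0:ℝ) ≤ (w ε N 0 - w ε N 1)^2 := sq_nonneg _
  have h3 := sq_nonneg (w ε N 0)
  have h4 := sq_nonneg (w ε N 1)
  have h5 := sq_nonneg (w ε N 2)
  fin_cases j
  · show (w ε N 0)^2 ≤ Qv ε N; simp only [Qv]; nlinarith
  · show (w ε N 1)^2 ≤ Qv ε N; simp only [Qv]; nlinarith
  · show (w ε N 2)^2 ≤ Qv ε N; simp only [Qv]; nlinarith

lemma Q_nonneg (ε : Fin 3 → Fin 2) (N : Fin 3 → ℤ) : 0 ≤ Qv ε N := by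
  simp only [Qv]; nlinarith [sq_nonneg (w ε N 0 - w ε N 1), sq_nonneg (w ε N 0),
    sq_nonneg (w ε N 1), sq_nonneg (w ε N 2)]

lemma ww_le_Q (ε : Fin 3 → Fin 2) (N : Fin 3 → ℤ) (j k : Fin 3) :
    |w ε N j * w ε N k| ≤ Qv ε N := by
  have h1 := sq_le_Q ε N j
  have h2 := sq_le_Q ε N k
  rw [abs_mul]
  nlinarith [_root_.sq_abs (w ε N j), _root_.sq_abs (w ε N k),
    sq_nonneg (|w ε N j| - |w ε N k|), abs_nonneg (w ε N j), abs_nonneg (w ε N k)]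

lemma quarter_le (n : ℤ) (e : Fin 2) : (n:ℝ)^2/4 ≤ ((n:ℝ) + (e.val:ℝ)/2)^2 := by
  fin_cases e
  · show (n:ℝ)^2/4 ≤ ((n:ℝ) + ((0:ℕ):ℝ)/2)^2
    push_cast
    nlinarith [sq_nonneg (n:ℝ)]
  · show (n:ℝ)^2/4 ≤ ((n:ℝ) + ((1:ℕ):ℝ)/2)^2
    have h : (0:ℤ) ≤ (3*n+1)*(n+1) := by rcases le_or_gt 0 n with h|h <;> nlinarith
    have h' : (0:ℝ) ≤ (3*(n:ℝ)+1)*((n:ℝ)+1) := by exact_mod_cast h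
    push_cast
    nlinarith

lemma quarter_le_Q (ε : Fin 3 → Fin 2) (N : Fin 3 → ℤ) :
    ((N 0:ℝ)^2 + (N 1:ℝ)^2 + (N 2:ℝ)^2)/4 ≤ Qv ε N := by
  have h0 := quarter_le (N 0) (ε 0)
  have h1 := quarter_le (N 1) (ε 1)
  have h2 := quarter_le (N 2) (ε 2)
  simp only [Qv, w] at *
  nlinarith [sq_nonneg ((N 0:ℝ) + ((ε 0).val:ℝ)/2 - ((N 1:ℝ) + ((ε 1).val:ℝ)/2))]

lemma norm_pha_le (R : Matrix (Fin 3) (Fin 3) ℂ) (ε δ : Fin 3 → Fin 2) (N : Fin 3 → ℤ) :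
    ‖pha R ε δ N‖ ≤ Real.exp (Real.pi * (∑ j, ∑ k, |(R j k).im|) * Qv ε N) := by
  rw [pha, show (↑Real.pi * I * (∑ j, ∑ k, (w ε N j : ℂ) * R j k * (w ε N k : ℂ))
    + ↑Real.pi * I * (∑ j, (w ε N j : ℂ) * ((δ j).val : ℂ)))
    = (↑Real.pi : ℂ) * (((∑ j, ∑ k, (w ε N j : ℂ) * R j k * (w ε N k : ℂ))
      + (∑ j, (w ε N j : ℂ) * ((δ j).val : ℂ))) * I) from by ring]
  rw [Complex.norm_exp, Complex.re_ofReal_mul, Complex.mul_I_re]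
  apply Real.exp_le_exp.2
  have him : ((∑ j, ∑ k, (w ε N j : ℂ) * R j k * (w ε N k : ℂ))
      + (∑ j, (w ε N j : ℂ) * ((δ j).val : ℂ))).im
      = ∑ j : Fin 3, ∑ k : Fin 3, w ε N j * (R j k).im * w ε N k := by
    simp [Fin.sum_univ_three, Complex.add_im, Complex.mul_im]
    try ring
  rw [him]
  have key : ∀ j k : Fin 3, -(w ε N j * (R j k).im * w ε N k) ≤ |(R j k).im| * Qv ε N := by
    intro j k
    have h1 := ww_le_Q ε N j k
    have h2 := abs_nonneg (R j k).im
    have h3 : -(w ε N j * (R j k).im * w ε N k) ≤ |w ε N j * w ε N k| * |(R j k).im| := by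
      rw [← abs_mul]
      calc -(w ε N j * (R j k).im * w ε N k) ≤ |w ε N j * (R j k).im * w ε N k| := neg_le_abs _
        _ = |w ε N j * w ε N k * (R j k).im| := by ring_nf
    nlinarith
  rw [mul_assoc]
  apply mul_le_mul_of_nonneg_left _ Real.pi_nonneg
  have expand : (∑ j : Fin 3, ∑ k : Fin 3, |(R j k).im|) * Qv ε N
      = ∑ j : Fin 3, ∑ k : Fin 3, |(R j k).im| * Qv ε N := by
    rw [Finset.sum_mul]; congr 1; funext j; rw [Finset.sum_mul]
  rw [expand, Fin.sum_univ_three, Fin.sum_univ_three]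
  simp only [Fin.sum_univ_three]
  have := key 0 0; have := key 0 1; have := key 0 2
  have := key 1 0; have := key 1 1; have := key 1 2
  have := key 2 0; have := key 2 1; have := key 2 2
  linarith

lemma term_eq (R : Matrix (Fin 3) (Fin 3) ℂ) (ε δ : Fin 3 → Fin 2) (m : ℝ) (y : ℝ)
    (N : Fin 3 → ℤ) :
    Complex.exp (↑Real.pi * ↑m * ↑y) * Complex.exp (↑Real.pi * I *
        (∑ j, ∑ k, ((N j : ℂ) + ((((ε j).val : ℤ)) : ℂ) / 2) * tau R y j k *
          ((N k : ℂ) + ((((ε k).val : ℤ)) : ℂ) / 2)) +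
      2 * ↑Real.pi * I *
        (∑ j, ((N j : ℂ) + ((((ε j).val : ℤ)) : ℂ) / 2) *
          ((0 : Fin 3 → ℂ) j + ((((δ j).val : ℤ)) : ℂ) / 2)))
    = ↑(Real.exp (-(Real.pi * y * (Qv ε N - m)))) * pha R ε δ N := by
  rw [Complex.ofReal_exp, pha, ← Complex.exp_add, ← Complex.exp_add]
  congr 1
  have e00 : EK31 0 0 = 2 := rfl
  have e01 : EK31 0 1 = -1 := rfl
  have e02 : EK31 0 2 = 0 := rfl
  have e10 : EK31 1 0 = -1 := rfl
  have e11 : EK31 1 1 = 2 := rfl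
  have e12 : EK31 1 2 = 0 := rfl
  have e20 : EK31 2 0 = 0 := rfl
  have e21 : EK31 2 1 = 0 := rfl
  have e22 : EK31 2 2 = 1 := rfl
  simp only [tau, Matrix.add_apply, Matrix.smul_apply, smul_eq_mul, Fin.sum_univ_three,
    Pi.zero_apply, zero_add, e00, e01, e02, e10, e11, e12, e20, e21, e22]
  push_cast [Qv, w]
  linear_combination (↑Real.pi * (y:ℂ) *
    (2*((N 0 : ℂ) + ((ε 0).val:ℂ)/2)^2 - 2*((N 0 : ℂ) + ((ε 0).val:ℂ)/2)*((N 1 : ℂ) + ((ε 1).val:ℂ)/2)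
      + 2*((N 1 : ℂ) + ((ε 1).val:ℂ)/2)^2 + ((N 2 : ℂ) + ((ε 2).val:ℂ)/2)^2)) * Complex.I_mul_I

lemma core (R : Matrix (Fin 3) (Fin 3) ℂ) (ε δ : Fin 3 → Fin 2) (m : ℝ) (hm : 0 ≤ m)
    (S : Finset (Fin 3 → ℤ)) (hmin : ∀ N ∈ S, Qv ε N = m)
    (hgap : ∀ N ∉ S, m + 1 ≤ Qv ε N) :
    Tendsto (fun y : ℝ => Complex.exp (↑Real.pi * ↑m * ↑y) *
        theta 3 (fun j => ((ε j).val : ℤ)) (fun j => ((δ j).val : ℤ)) (tau R y) 0)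
      atTop (𝓝 (∑ N ∈ S, pha R ε δ N)) := by
  classical
  obtain ⟨CR, hCRdef⟩ : ∃ c : ℝ, c = ∑ j, ∑ k, |(R j k).im| := ⟨_, rfl⟩
  have hCR : 0 ≤ CR := hCRdef ▸ Finset.sum_nonneg fun j _ => Finset.sum_nonneg fun k _ => abs_nonneg _
  obtain ⟨Y, hYdef⟩ : ∃ c : ℝ, c = CR + 1 := ⟨_, rfl⟩
  have hQm : ∀ N, m ≤ Qv ε N := by
    intro N
    by_cases h : N ∈ S
    · exact (hmin N h).ge
    · linarith [hgap N h]
  set F : ℝ → (Fin 3 → ℤ) → ℂ :=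
    fun y N => ↑(Real.exp (-(Real.pi * y * (Qv ε N - m)))) * pha R ε δ N with hF
  set g : (Fin 3 → ℤ) → ℂ := fun N => if N ∈ S then pha R ε δ N else 0 with hg
  set bound : (Fin 3 → ℤ) → ℝ :=
    fun N => Real.exp (Real.pi * Y * m) * Real.exp (-(Real.pi/4) *
      ((N 0:ℝ)^2 + (N 1:ℝ)^2 + (N 2:ℝ)^2)) with hbound
  have hsum : Summable bound :=
    (gauss3 (Real.pi/4) (by positivity)).mul_left _
  have hb : ∀ᶠ y in atTop, ∀ N, ‖F y N‖ ≤ bound N := by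
    filter_upwards [eventually_ge_atTop Y] with y hy N
    have hQ0 := Q_nonneg ε N
    have hQq := quarter_le_Q ε N
    have h1 : ‖F y N‖ ≤ Real.exp (-(Real.pi * y * (Qv ε N - m))) *
        Real.exp (Real.pi * CR * Qv ε N) := by
      rw [hF]
      simp only [norm_mul, Complex.norm_real, Real.norm_eq_abs, abs_of_pos (Real.exp_pos _)]
      rw [hCRdef]
      exact mul_le_mul_of_nonneg_left (norm_pha_le R ε δ N) (Real.exp_pos _).le
    rw [← Real.exp_add] at h1
    refine h1.trans ?_
    rw [hbound]
    simp only []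
    rw [← Real.exp_add]
    apply Real.exp_le_exp.2
    have hYCR : Y - CR = 1 := by rw [hYdef]; ring
    have key1 : -(Real.pi * y * (Qv ε N - m)) ≤ -(Real.pi * Y * (Qv ε N - m)) := by
      nlinarith [mul_nonneg (mul_nonneg Real.pi_pos.le (sub_nonneg.2 hy))
        (sub_nonneg.2 (hQm N))]
    have key2 : -(Real.pi * Y * (Qv ε N - m)) + Real.pi * CR * Qv ε N
        ≤ Real.pi * Y * m - Real.pi * Qv ε N := by
      have h0 : Y - CR - 1 = 0 := by rw [hYdef]; ring
      have h1 : Real.pi * Qv ε N * (Y - CR - 1) = 0 := by rw [h0, mul_zero]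
      nlinarith [h1]
    have key3 : -Real.pi * Qv ε N ≤ -(Real.pi/4) * ((N 0:ℝ)^2 + (N 1:ℝ)^2 + (N 2:ℝ)^2) := by
      have := mul_le_mul_of_nonneg_left hQq Real.pi_pos.le
      linarith
    nlinarith [key1, key2, key3]
  have hlim : ∀ N, Tendsto (fun y => F y N) atTop (𝓝 (g N)) := by
    intro N
    by_cases h : N ∈ S
    · have hq : Qv ε N = m := hmin N h
      have : ∀ y : ℝ, F y N = pha R ε δ N := by
        intro y; rw [hF]; simp [hq]
      rw [hg]
      simp only [h, if_pos]
      exact Tendsto.congr (fun y => (this y).symm) tendsto_const_nhds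
    · have hq : m + 1 ≤ Qv ε N := hgap N h
      rw [hg]; simp only [h, if_neg, if_false]
      have h0 : Tendsto (fun y : ℝ => Real.exp (-(Real.pi * y * (Qv ε N - m)))) atTop (𝓝 0) := by
        have heq : (fun y : ℝ => Real.exp (-(Real.pi * y * (Qv ε N - m))))
            = fun y : ℝ => Real.exp ((-(Real.pi * (Qv ε N - m))) * y) := by
          funext y; ring_nf
        rw [heq]
        apply Real.tendsto_exp_atBot.comp
        apply Tendsto.const_mul_atTop_of_neg (by nlinarith [Real.pi_pos]) tendsto_id
      have h0' : Tendsto (fun y : ℝ => (↑(Real.exp (-(Real.pi * y * (Qv ε N - m)))) : ℂ))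
          atTop (𝓝 0) := by
        rw [show ((0:ℂ)) = ((0:ℝ):ℂ) from by norm_num]
        exact (Complex.continuous_ofReal.tendsto 0).comp h0
      have := h0'.mul_const (pha R ε δ N)
      rw [zero_mul] at this
      exact this
  have hDCT := tendsto_tsum_of_dominated_convergence hsum hlim hb
  have htsumg : ∑' N, g N = ∑ N ∈ S, pha R ε δ N := by
    rw [tsum_eq_sum (f := g) (s := S) (fun N hN => by rw [hg]; simp [hN])]
    exact Finset.sum_congr rfl fun N hN => by rw [hg]; simp [hN]
  rw [htsumg] at hDCT
  apply hDCT.congr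
  intro y
  rw [theta, ← tsum_mul_left]
  exact tsum_congr fun N => (term_eq R ε δ m y N).symm

def Sfun (ε : Fin 3 → Fin 2) : Finset (Fin 3 → ℤ) :=
  {![0,0,0], ![0,0,-((ε 2).val:ℤ)], ![-((ε 0).val:ℤ), -((ε 1).val:ℤ), 0],
   ![-((ε 0).val:ℤ), -((ε 1).val:ℤ), -((ε 2).val:ℤ)]}
def m4 (ε : Fin 3 → Fin 2) : ℤ := (if ε 0 = 0 ∧ ε 1 = 0 then 0 else 2) + ((ε 2).val : ℤ)
noncomputable def mR (ε : Fin 3 → Fin 2) : ℝ := (m4 ε : ℝ)/4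

lemma m4_nonneg (ε : Fin 3 → Fin 2) : 0 ≤ m4 ε := by unfold m4; split <;> omega
lemma mR_nonneg (ε : Fin 3 → Fin 2) : 0 ≤ mR ε :=
  div_nonneg (by exact_mod_cast m4_nonneg ε) (by norm_num)

lemma eq_vec3_iff {α : Type*} (N : Fin 3 → α) (a b c : α) :
    N = ![a,b,c] ↔ N 0 = a ∧ N 1 = b ∧ N 2 = c := by
  constructor
  · rintro rfl; exact ⟨rfl, rfl, rfl⟩
  · rintro ⟨h0,h1,h2⟩; funext i; fin_cases i <;> assumption

lemma vec3_eta {α : Type*} (v : Fin 3 → α) : v = ![v 0, v 1, v 2] := by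
  funext i; fin_cases i <;> rfl

lemma f2 (n : ℤ) (h : n ≠ 0) : (1:ℝ) ≤ (n:ℝ)^2 := by
  have h1 : (1:ℤ) ≤ n^2 := by rcases lt_or_gt_of_ne h with h'|h' <;> nlinarith
  exact_mod_cast h1

lemma f3 (n : ℤ) : (1/4:ℝ) ≤ ((n:ℝ)+1/2)^2 := by
  have h1 : (0:ℤ) ≤ n*(n+1) := by rcases le_or_gt 0 n with h'|h' <;> nlinarith
  have h2 : (0:ℝ) ≤ (n:ℝ)*((n:ℝ)+1) := by exact_mod_cast h1
  nlinarith

lemma f4 (n : ℤ) (h0 : n ≠ 0) (h1 : n ≠ -1) : (9/4:ℝ) ≤ ((n:ℝ)+1/2)^2 := by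
  have hd : n ≤ -2 ∨ 1 ≤ n := by omega
  have h2 : (0:ℤ) ≤ (n+2)*(n-1) := by rcases hd with h'|h' <;> nlinarith
  have h3 : (0:ℝ) ≤ ((n:ℝ)+2)*((n:ℝ)-1) := by exact_mod_cast h2
  nlinarith

lemma hmin_all (ε : Fin 3 → Fin 2) : ∀ N ∈ Sfun ε, Qv ε N = mR ε := by
  obtain ⟨a, b, c, rfl⟩ : ∃ a b c, ε = ![a,b,c] := ⟨ε 0, ε 1, ε 2, vec3_eta ε⟩
  intro N hN
  fin_cases a <;> fin_cases b <;> fin_cases c <;>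
  · simp only [Sfun, Finset.mem_insert, Finset.mem_singleton] at hN
    rcases hN with rfl|rfl|rfl|rfl <;> norm_num [Qv, w, mR, m4, Matrix.cons_val_two, Matrix.tail_cons, Matrix.head_cons]

lemma hgap_all (ε : Fin 3 → Fin 2) : ∀ N ∉ Sfun ε, mR ε + 1 ≤ Qv ε N := by
  obtain ⟨a, b, c, rfl⟩ : ∃ a b c, ε = ![a,b,c] := ⟨ε 0, ε 1, ε 2, vec3_eta ε⟩
  intro N hN
  fin_cases a <;> fin_cases b <;> fin_cases c <;>
    simp only [Sfun, Finset.mem_insert, Finset.mem_singleton, eq_vec3_iff] at hN <;>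
    push_neg at hN <;> norm_num [Matrix.cons_val_two, Matrix.tail_cons, Matrix.head_cons] at hN <;> norm_num [Qv, w, mR, m4, Matrix.cons_val_two, Matrix.tail_cons, Matrix.head_cons]
  -- now 8 goals, ε = 000, 001, 010, 011, 100, 101, 110, 111 (order from fin_cases: c fastest)
  -- case 000
  · by_cases h0 : N 0 = 0
    · by_cases h1 : N 1 = 0
      · rw [h0, h1] at hN ⊢
        push_cast
        nlinarith [f2 (N 2) (by omega), sq_nonneg ((N 2:ℝ))]
      · nlinarith [f2 (N 1) h1, sq_nonneg ((N 0:ℝ)), sq_nonneg ((N 2:ℝ)),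
          sq_nonneg ((N 0:ℝ) - (N 1:ℝ))]
    · nlinarith [f2 (N 0) h0, sq_nonneg ((N 1:ℝ)), sq_nonneg ((N 2:ℝ)),
        sq_nonneg ((N 0:ℝ) - (N 1:ℝ))]
  -- case 001
  · by_cases h0 : N 0 = 0
    · by_cases h1 : N 1 = 0
      · have hc : N 2 ≠ 0 ∧ N 2 ≠ -1 := by omega
        rw [h0, h1]
        push_cast
        nlinarith [f4 (N 2) hc.1 hc.2]
      · nlinarith [f2 (N 1) h1, f3 (N 2), sq_nonneg ((N 0:ℝ)),
          sq_nonneg ((N 0:ℝ) - (N 1:ℝ))]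
    · nlinarith [f2 (N 0) h0, f3 (N 2), sq_nonneg ((N 1:ℝ)),
        sq_nonneg ((N 0:ℝ) - (N 1:ℝ))]
  -- case 010
  · by_cases h0 : N 0 = 0
    · by_cases h2 : N 2 = 0
      · have hc : N 1 ≠ 0 ∧ N 1 ≠ -1 := by omega
        rw [h0, h2]
        push_cast
        nlinarith [f4 (N 1) hc.1 hc.2]
      · rw [h0]
        push_cast
        nlinarith [f3 (N 1), f2 (N 2) h2]
    · have hf := f3 (N 0 - N 1 - 1)
      push_cast at hf
      nlinarith [f2 (N 0) h0, f3 (N 1), sq_nonneg ((N 2:ℝ)), hf]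
  -- case 011
  · by_cases h0 : N 0 = 0
    · by_cases hC : N 1 = 0 ∨ N 1 = -1
      · have hc : N 2 ≠ 0 ∧ N 2 ≠ -1 := by omega
        rw [h0]
        push_cast
        nlinarith [f3 (N 1), f4 (N 2) hc.1 hc.2, sq_nonneg ((N 1:ℝ) + 1/2)]
      · push_neg at hC
        rw [h0]
        push_cast
        nlinarith [f4 (N 1) hC.1 hC.2, f3 (N 2)]
    · have hf := f3 (N 0 - N 1 - 1)
      push_cast at hf
      nlinarith [f2 (N 0) h0, f3 (N 1), f3 (N 2), hf]
  -- case 100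
  · by_cases h1 : N 1 = 0
    · by_cases h2 : N 2 = 0
      · have hc : N 0 ≠ 0 ∧ N 0 ≠ -1 := by omega
        rw [h1, h2]
        push_cast
        nlinarith [f4 (N 0) hc.1 hc.2]
      · rw [h1]
        push_cast
        nlinarith [f3 (N 0), f2 (N 2) h2]
    · have hf := f3 (N 0 - N 1)
      push_cast at hf
      nlinarith [f3 (N 0), f2 (N 1) h1, sq_nonneg ((N 2:ℝ)), hf]
  -- case 101
  · by_cases h1 : N 1 = 0
    · by_cases hC : N 2 = 0 ∨ N 2 = -1
      · have hc : N 0 ≠ 0 ∧ N 0 ≠ -1 := by omega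
        rw [h1]
        push_cast
        nlinarith [f4 (N 0) hc.1 hc.2, f3 (N 2)]
      · push_neg at hC
        rw [h1]
        push_cast
        nlinarith [f3 (N 0), f4 (N 2) hC.1 hC.2]
    · have hf := f3 (N 0 - N 1)
      push_cast at hf
      nlinarith [f3 (N 0), f2 (N 1) h1, f3 (N 2), hf]
  -- case 110
  · by_cases h01 : N 0 = N 1
    · by_cases h2 : N 2 = 0
      · have hc : N 0 ≠ 0 ∧ N 0 ≠ -1 := by omega
        have hc1 : N 1 ≠ 0 ∧ N 1 ≠ -1 := by rw [← h01]; exact hc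
        nlinarith [f4 (N 0) hc.1 hc.2, f4 (N 1) hc1.1 hc1.2,
          sq_nonneg ((N 0:ℝ) - (N 1:ℝ)), sq_nonneg ((N 2:ℝ))]
      · nlinarith [f3 (N 0), f3 (N 1), f2 (N 2) h2, sq_nonneg ((N 0:ℝ) - (N 1:ℝ))]
    · have hf := f2 (N 0 - N 1) (by omega)
      push_cast at hf
      nlinarith [f3 (N 0), f3 (N 1), sq_nonneg ((N 2:ℝ)), hf]
  -- case 111
  · by_cases h01 : N 0 = N 1
    · by_cases hC : N 2 = 0 ∨ N 2 = -1
      · have hc : N 0 ≠ 0 ∧ N 0 ≠ -1 := by omega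
        have hc1 : N 1 ≠ 0 ∧ N 1 ≠ -1 := by rw [← h01]; exact hc
        nlinarith [f4 (N 0) hc.1 hc.2, f4 (N 1) hc1.1 hc1.2, f3 (N 2),
          sq_nonneg ((N 0:ℝ) - (N 1:ℝ))]
      · push_neg at hC
        nlinarith [f3 (N 0), f3 (N 1), f4 (N 2) hC.1 hC.2, sq_nonneg ((N 0:ℝ) - (N 1:ℝ))]
    · have hf := f2 (N 0 - N 1) (by omega)
      push_cast at hf
      nlinarith [f3 (N 0), f3 (N 1), f3 (N 2), hf]
def evens : Finset ((Fin 3 → Fin 2) × (Fin 3 → Fin 2)) :=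
  Finset.univ.filter (fun c => (∑ j, (c.1 j).val * (c.2 j).val) % 2 = 0)

lemma sum_mR : ∑ c ∈ evens, mR c.1 = 16 := by
  have h : (∑ c ∈ evens, m4 c.1) = 64 := by decide
  have h2 : ∑ c ∈ evens, mR c.1 = ((∑ c ∈ evens, m4 c.1 : ℤ) : ℝ)/4 := by
    simp only [mR]
    rw [← Finset.sum_div]
    norm_cast
  rw [h2, h]; norm_num

lemma prod_exp_eq (y : ℝ) (f : _ → ℂ) :
    ∏ c ∈ evens, (Complex.exp (↑Real.pi * ↑(mR c.1) * ↑y) * f c)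
      = (Real.exp (16 * Real.pi * y) : ℂ) * ∏ c ∈ evens, f c := by
  rw [Finset.prod_mul_distrib, ← Complex.exp_sum]
  congr 2
  rw [Complex.ofReal_exp]
  congr 1
  have h3 : ∑ c ∈ evens, (↑Real.pi * (↑(mR c.1):ℂ) * ↑y)
      = ↑Real.pi * ↑y * ∑ c ∈ evens, (↑(mR c.1):ℂ) := by
    rw [Finset.mul_sum]
    apply Finset.sum_congr rfl
    intros; ring
  have h4 : ∑ c ∈ evens, (↑(mR c.1):ℂ) = ((16:ℝ):ℂ) := by
    rw [← sum_mR]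
    norm_cast
  rw [h3, h4]
  push_cast
  ring

lemma aux_bd (a c b : ℝ) : -( |c| * (a^2+b^2)/2 ) ≤ a*c*b := by
  nlinarith [mul_nonneg (by linarith [neg_abs_le c] : (0:ℝ) ≤ |c|+c) (sq_nonneg (a+b)),
    mul_nonneg (by linarith [le_abs_self c] : (0:ℝ) ≤ |c|-c) (sq_nonneg (a-b))]

lemma siegel (R : Matrix (Fin 3) (Fin 3) ℂ) (hR : R.IsSymm) :
    ∀ᶠ y : ℝ in atTop, SiegelUpper 3 ((I * (y : ℂ)) • EK31 + R) := by
  obtain ⟨CB, hCBdef⟩ : ∃ c : ℝ, c = ∑ j, ∑ k, |(R j k).im| := ⟨_, rfl⟩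
  have hCB : 0 ≤ CB := hCBdef ▸ Finset.sum_nonneg fun j _ => Finset.sum_nonneg fun k _ =>
    abs_nonneg _
  filter_upwards [eventually_gt_atTop CB] with y hy
  have hy0 : 0 < y := lt_of_le_of_lt hCB hy
  have hE : (EK31).IsSymm := by
    rw [Matrix.IsSymm]
    ext i j
    fin_cases i <;> fin_cases j <;> rfl
  have hsymm : ((I * (y : ℂ)) • EK31 + R).IsSymm := by
    rw [Matrix.IsSymm, Matrix.transpose_add, Matrix.transpose_smul, hE, hR]
  constructor
  · exact hsymm
  · refine Matrix.PosDef.of_dotProduct_mulVec_pos ?_ ?_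
    · rw [Matrix.IsHermitian]
      ext i j
      simp only [Matrix.conjTranspose_apply, Matrix.of_apply, star_trivial]
      have h' : ((I * (y : ℂ)) • EK31 + R) j i = ((I * (y : ℂ)) • EK31 + R) i j :=
        congrFun (congrFun hsymm i) j
      rw [h']
    · intro x hx
      have hxs : 0 < x 0^2 + x 1^2 + x 2^2 := by
        by_cases h0 : x 0 = 0
        · by_cases h1 : x 1 = 0
          · by_cases h2 : x 2 = 0
            · exact absurd (funext fun i => by fin_cases i <;> assumption) hx
            · have : 0 < x 2^2 := by positivity
              nlinarith [sq_nonneg (x 0), sq_nonneg (x 1)]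
          · have : 0 < x 1^2 := by positivity
            nlinarith [sq_nonneg (x 0), sq_nonneg (x 2)]
        · have : 0 < x 0^2 := by positivity
          nlinarith [sq_nonneg (x 1), sq_nonneg (x 2)]
      have sqle : ∀ j : Fin 3, x j^2 ≤ x 0^2 + x 1^2 + x 2^2 := by
        intro j
        fin_cases j
        · show x 0^2 ≤ _; nlinarith [sq_nonneg (x 1), sq_nonneg (x 2)]
        · show x 1^2 ≤ _; nlinarith [sq_nonneg (x 0), sq_nonneg (x 2)]
        · show x 2^2 ≤ _; nlinarith [sq_nonneg (x 0), sq_nonneg (x 1)]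
      have cross : ∀ j k : Fin 3, -( |(R j k).im| * (x 0^2 + x 1^2 + x 2^2)) ≤
          x j * (R j k).im * x k := by
        intro j k
        have h1 := aux_bd (x j) ((R j k).im) (x k)
        have h2 : (x j^2 + x k^2)/2 ≤ x 0^2 + x 1^2 + x 2^2 := by
          linarith [sqle j, sqle k, sq_nonneg (x j), sq_nonneg (x k)]
        nlinarith [mul_le_mul_of_nonneg_left h2 (abs_nonneg ((R j k).im))]
      have hCBexp : CB = |(R 0 0).im| + |(R 0 1).im| + |(R 0 2).im| + |(R 1 0).im|
          + |(R 1 1).im| + |(R 1 2).im| + |(R 2 0).im| + |(R 2 1).im| + |(R 2 2).im| := by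
        rw [hCBdef]
        simp [Fin.sum_univ_three]
        ring
      have hprod : (|(R 0 0).im| + |(R 0 1).im| + |(R 0 2).im| + |(R 1 0).im|
          + |(R 1 1).im| + |(R 1 2).im| + |(R 2 0).im| + |(R 2 1).im| + |(R 2 2).im|)
            * (x 0^2 + x 1^2 + x 2^2) < y * (x 0^2 + x 1^2 + x 2^2) := by
        apply mul_lt_mul_of_pos_right _ hxs
        rw [← hCBexp]
        exact hy
      have hq : 0 ≤ y * (x 0 - x 1)^2 := mul_nonneg hy0.le (sq_nonneg _)
      have e00 : EK31 0 0 = 2 := rfl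
      have e01 : EK31 0 1 = -1 := rfl
      have e02 : EK31 0 2 = 0 := rfl
      have e10 : EK31 1 0 = -1 := rfl
      have e11 : EK31 1 1 = 2 := rfl
      have e12 : EK31 1 2 = 0 := rfl
      have e20 : EK31 2 0 = 0 := rfl
      have e21 : EK31 2 1 = 0 := rfl
      have e22 : EK31 2 2 = 1 := rfl
      simp only [Matrix.mulVec, dotProduct, Fin.sum_univ_three, Matrix.of_apply,
        Matrix.add_apply, Matrix.smul_apply, smul_eq_mul, Pi.star_apply, star_trivial,
        e00, e01, e02, e10, e11, e12, e20, e21, e22]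
      simp only [Complex.add_im, Complex.mul_im, Complex.mul_re, Complex.I_re, Complex.I_im,
        Complex.ofReal_re, Complex.ofReal_im]
      norm_num
      nlinarith [cross 0 0, cross 0 1, cross 0 2, cross 1 0, cross 1 1, cross 1 2,
        cross 2 0, cross 2 1, cross 2 2, hprod, hq]
noncomputable def Lfun (R : Matrix (Fin 3) (Fin 3) ℂ)
    (c : (Fin 3 → Fin 2) × (Fin 3 → Fin 2)) : ℂ := ∑ N ∈ Sfun c.1, pha R c.1 c.2 N

variable (R : Matrix (Fin 3) (Fin 3) ℂ)

lemma exp_add_pi (z : ℂ) : Complex.exp (z + ↑Real.pi*I) = -Complex.exp z := by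
  rw [Complex.exp_add, Complex.exp_pi_mul_I]; ring

lemma exp_sub_pi (z : ℂ) : Complex.exp (z - ↑Real.pi*I) = -Complex.exp z := by
  rw [Complex.exp_sub, Complex.exp_pi_mul_I]
  field_simp

lemma L000 (δ : Fin 3 → Fin 2) : Lfun R (![0,0,0], δ) = 1 := by
  rw [Lfun, show Sfun ![0,0,0] = {![0,0,0]} from by decide, Finset.sum_singleton, pha]
  norm_num [w, Fin.sum_univ_three, Matrix.cons_val_two, Matrix.tail_cons, Matrix.head_cons]
  try exact Complex.exp_zero

lemma L001 (d0 d1 : Fin 2) :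
    Lfun R (![0,0,1], ![d0,d1,0]) = 2*Complex.exp (↑Real.pi * I * (R 2 2/4)) := by
  rw [Lfun, show Sfun ![0,0,1] = {![0,0,0], ![0,0,-1]} from by decide]
  rw [Finset.sum_insert (by decide), Finset.sum_singleton]
  have e1 : pha R ![0,0,1] ![d0,d1,0] ![0,0,0] = Complex.exp (↑Real.pi * I * (R 2 2/4)) := by
    rw [pha]
    congr 1
    simp only [w, Fin.sum_univ_three, Matrix.cons_val_zero, Matrix.cons_val_one,
      Matrix.cons_val_two, Matrix.head_cons, Matrix.vecHead, Matrix.vecTail, Function.comp_apply,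
      Fin.succ_zero_eq_one, Fin.val_zero, Fin.val_one]
    push_cast
    ring
  have e2 : pha R ![0,0,1] ![d0,d1,0] ![0,0,-1] = Complex.exp (↑Real.pi * I * (R 2 2/4)) := by
    rw [pha]
    congr 1
    simp only [w, Fin.sum_univ_three, Matrix.cons_val_zero, Matrix.cons_val_one,
      Matrix.cons_val_two, Matrix.head_cons, Matrix.vecHead, Matrix.vecTail, Function.comp_apply,
      Fin.succ_zero_eq_one, Fin.val_zero, Fin.val_one]
    push_cast
    ring
  rw [e1, e2]
  ring

lemma L100 (d1 d2 : Fin 2) :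
    Lfun R (![1,0,0], ![0,d1,d2]) = 2*Complex.exp (↑Real.pi * I * (R 0 0/4)) := by
  rw [Lfun, show Sfun ![1,0,0] = {![0,0,0], ![-1,0,0]} from by decide]
  rw [Finset.sum_insert (by decide), Finset.sum_singleton]
  have e1 : pha R ![1,0,0] ![0,d1,d2] ![0,0,0] = Complex.exp (↑Real.pi * I * (R 0 0/4)) := by
    rw [pha]
    congr 1
    simp only [w, Fin.sum_univ_three, Matrix.cons_val_zero, Matrix.cons_val_one,
      Matrix.cons_val_two, Matrix.head_cons, Matrix.vecHead, Matrix.vecTail, Function.comp_apply,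
      Fin.succ_zero_eq_one, Fin.val_zero, Fin.val_one]
    push_cast
    ring
  have e2 : pha R ![1,0,0] ![0,d1,d2] ![-1,0,0] = Complex.exp (↑Real.pi * I * (R 0 0/4)) := by
    rw [pha]
    congr 1
    simp only [w, Fin.sum_univ_three, Matrix.cons_val_zero, Matrix.cons_val_one,
      Matrix.cons_val_two, Matrix.head_cons, Matrix.vecHead, Matrix.vecTail, Function.comp_apply,
      Fin.succ_zero_eq_one, Fin.val_zero, Fin.val_one]
    push_cast
    ring
  rw [e1, e2]
  ring

lemma L010 (d0 d2 : Fin 2) :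
    Lfun R (![0,1,0], ![d0,0,d2]) = 2*Complex.exp (↑Real.pi * I * (R 1 1/4)) := by
  rw [Lfun, show Sfun ![0,1,0] = {![0,0,0], ![0,-1,0]} from by decide]
  rw [Finset.sum_insert (by decide), Finset.sum_singleton]
  have e1 : pha R ![0,1,0] ![d0,0,d2] ![0,0,0] = Complex.exp (↑Real.pi * I * (R 1 1/4)) := by
    rw [pha]
    congr 1
    simp only [w, Fin.sum_univ_three, Matrix.cons_val_zero, Matrix.cons_val_one,
      Matrix.cons_val_two, Matrix.head_cons, Matrix.vecHead, Matrix.vecTail, Function.comp_apply,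
      Fin.succ_zero_eq_one, Fin.val_zero, Fin.val_one]
    push_cast
    ring
  have e2 : pha R ![0,1,0] ![d0,0,d2] ![0,-1,0] = Complex.exp (↑Real.pi * I * (R 1 1/4)) := by
    rw [pha]
    congr 1
    simp only [w, Fin.sum_univ_three, Matrix.cons_val_zero, Matrix.cons_val_one,
      Matrix.cons_val_two, Matrix.head_cons, Matrix.vecHead, Matrix.vecTail, Function.comp_apply,
      Fin.succ_zero_eq_one, Fin.val_zero, Fin.val_one]
    push_cast
    ring
  rw [e1, e2]
  ring

lemma L110a (hR : R.IsSymm) (d2 : Fin 2) :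
    Lfun R (![1,1,0], ![0,0,d2]) = 2*Complex.exp (↑Real.pi * I * ((R 0 0 + 2*R 0 1 + R 1 1)/4)) := by
  have h01 : R 1 0 = R 0 1 := congrFun (congrFun hR 0) 1
  have h02 : R 2 0 = R 0 2 := congrFun (congrFun hR 0) 2
  have h12 : R 2 1 = R 1 2 := congrFun (congrFun hR 1) 2
  rw [Lfun, show Sfun ![1,1,0] = {![0,0,0], ![-1,-1,0]} from by decide]
  rw [Finset.sum_insert (by decide), Finset.sum_singleton]
  have e1 : pha R ![1,1,0] ![0,0,d2] ![0,0,0] = Complex.exp (↑Real.pi * I * ((R 0 0 + 2*R 0 1 + R 1 1)/4)) := by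
    rw [pha]
    congr 1
    simp only [w, Fin.sum_univ_three, Matrix.cons_val_zero, Matrix.cons_val_one,
      Matrix.cons_val_two, Matrix.head_cons, Matrix.vecHead, Matrix.vecTail, Function.comp_apply,
      Fin.succ_zero_eq_one, Fin.val_zero, Fin.val_one]
    push_cast
    linear_combination (↑Real.pi * I / 4) * h01
  have e2 : pha R ![1,1,0] ![0,0,d2] ![-1,-1,0] = Complex.exp (↑Real.pi * I * ((R 0 0 + 2*R 0 1 + R 1 1)/4)) := by
    rw [pha]
    congr 1
    simp only [w, Fin.sum_univ_three, Matrix.cons_val_zero, Matrix.cons_val_one,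
      Matrix.cons_val_two, Matrix.head_cons, Matrix.vecHead, Matrix.vecTail, Function.comp_apply,
      Fin.succ_zero_eq_one, Fin.val_zero, Fin.val_one]
    push_cast
    linear_combination (↑Real.pi * I / 4) * h01
  rw [e1, e2]
  ring

lemma L110b (hR : R.IsSymm) (d2 : Fin 2) :
    Lfun R (![1,1,0], ![1,1,d2]) = -(2*Complex.exp (↑Real.pi * I * ((R 0 0 + 2*R 0 1 + R 1 1)/4))) := by
  have h01 : R 1 0 = R 0 1 := congrFun (congrFun hR 0) 1
  have h02 : R 2 0 = R 0 2 := congrFun (congrFun hR 0) 2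
  have h12 : R 2 1 = R 1 2 := congrFun (congrFun hR 1) 2
  rw [Lfun, show Sfun ![1,1,0] = {![0,0,0], ![-1,-1,0]} from by decide]
  rw [Finset.sum_insert (by decide), Finset.sum_singleton]
  have e1 : pha R ![1,1,0] ![1,1,d2] ![0,0,0] = -Complex.exp (↑Real.pi * I * ((R 0 0 + 2*R 0 1 + R 1 1)/4)) := by
    rw [pha, show -Complex.exp (↑Real.pi * I * ((R 0 0 + 2*R 0 1 + R 1 1)/4)) = Complex.exp ((↑Real.pi * I * ((R 0 0 + 2*R 0 1 + R 1 1)/4)) + ↑Real.pi * I) from (exp_add_pi _).symm]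
    congr 1
    simp only [w, Fin.sum_univ_three, Matrix.cons_val_zero, Matrix.cons_val_one,
      Matrix.cons_val_two, Matrix.head_cons, Matrix.vecHead, Matrix.vecTail, Function.comp_apply,
      Fin.succ_zero_eq_one, Fin.val_zero, Fin.val_one]
    push_cast
    linear_combination (↑Real.pi * I / 4) * h01
  have e2 : pha R ![1,1,0] ![1,1,d2] ![-1,-1,0] = -Complex.exp (↑Real.pi * I * ((R 0 0 + 2*R 0 1 + R 1 1)/4)) := by
    rw [pha, show -Complex.exp (↑Real.pi * I * ((R 0 0 + 2*R 0 1 + R 1 1)/4)) = Complex.exp ((↑Real.pi * I * ((R 0 0 + 2*R 0 1 + R 1 1)/4)) - ↑Real.pi * I) from (exp_sub_pi _).symm]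
    congr 1
    simp only [w, Fin.sum_univ_three, Matrix.cons_val_zero, Matrix.cons_val_one,
      Matrix.cons_val_two, Matrix.head_cons, Matrix.vecHead, Matrix.vecTail, Function.comp_apply,
      Fin.succ_zero_eq_one, Fin.val_zero, Fin.val_one]
    push_cast
    linear_combination (↑Real.pi * I / 4) * h01
  rw [e1, e2]
  ring

lemma L101a (hR : R.IsSymm) (d1 : Fin 2) :
    Lfun R (![1,0,1], ![0,d1,0]) = 2*Complex.exp (↑Real.pi * I * ((R 0 0 + R 2 2)/4) + ↑Real.pi * I * (R 0 2/2)) + 2*Complex.exp (↑Real.pi * I * ((R 0 0 + R 2 2)/4) - ↑Real.pi * I * (R 0 2/2)) := by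
  have h01 : R 1 0 = R 0 1 := congrFun (congrFun hR 0) 1
  have h02 : R 2 0 = R 0 2 := congrFun (congrFun hR 0) 2
  have h12 : R 2 1 = R 1 2 := congrFun (congrFun hR 1) 2
  rw [Lfun, show Sfun ![1,0,1] = {![0,0,0], ![0,0,-1], ![-1,0,0], ![-1,0,-1]} from by decide]
  rw [Finset.sum_insert (by decide), Finset.sum_insert (by decide), Finset.sum_insert (by decide), Finset.sum_singleton]
  have e1 : pha R ![1,0,1] ![0,d1,0] ![0,0,0] = Complex.exp (↑Real.pi * I * ((R 0 0 + R 2 2)/4) + ↑Real.pi * I * (R 0 2/2)) := by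
    rw [pha]
    congr 1
    simp only [w, Fin.sum_univ_three, Matrix.cons_val_zero, Matrix.cons_val_one,
      Matrix.cons_val_two, Matrix.head_cons, Matrix.vecHead, Matrix.vecTail, Function.comp_apply,
      Fin.succ_zero_eq_one, Fin.val_zero, Fin.val_one]
    push_cast
    linear_combination (↑Real.pi * I / 4) * h02
  have e2 : pha R ![1,0,1] ![0,d1,0] ![0,0,-1] = Complex.exp (↑Real.pi * I * ((R 0 0 + R 2 2)/4) - ↑Real.pi * I * (R 0 2/2)) := by
    rw [pha]
    congr 1
    simp only [w, Fin.sum_univ_three, Matrix.cons_val_zero, Matrix.cons_val_one,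
      Matrix.cons_val_two, Matrix.head_cons, Matrix.vecHead, Matrix.vecTail, Function.comp_apply,
      Fin.succ_zero_eq_one, Fin.val_zero, Fin.val_one]
    push_cast
    linear_combination (-(↑Real.pi * I) / 4) * h02
  have e3 : pha R ![1,0,1] ![0,d1,0] ![-1,0,0] = Complex.exp (↑Real.pi * I * ((R 0 0 + R 2 2)/4) - ↑Real.pi * I * (R 0 2/2)) := by
    rw [pha]
    congr 1
    simp only [w, Fin.sum_univ_three, Matrix.cons_val_zero, Matrix.cons_val_one,
      Matrix.cons_val_two, Matrix.head_cons, Matrix.vecHead, Matrix.vecTail, Function.comp_apply,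
      Fin.succ_zero_eq_one, Fin.val_zero, Fin.val_one]
    push_cast
    linear_combination (-(↑Real.pi * I) / 4) * h02
  have e4 : pha R ![1,0,1] ![0,d1,0] ![-1,0,-1] = Complex.exp (↑Real.pi * I * ((R 0 0 + R 2 2)/4) + ↑Real.pi * I * (R 0 2/2)) := by
    rw [pha]
    congr 1
    simp only [w, Fin.sum_univ_three, Matrix.cons_val_zero, Matrix.cons_val_one,
      Matrix.cons_val_two, Matrix.head_cons, Matrix.vecHead, Matrix.vecTail, Function.comp_apply,
      Fin.succ_zero_eq_one, Fin.val_zero, Fin.val_one]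
    push_cast
    linear_combination (↑Real.pi * I / 4) * h02
  rw [e1, e2, e3, e4]
  ring

lemma L101b (hR : R.IsSymm) (d1 : Fin 2) :
    Lfun R (![1,0,1], ![1,d1,1]) = -(2*Complex.exp (↑Real.pi * I * ((R 0 0 + R 2 2)/4) + ↑Real.pi * I * (R 0 2/2))) + 2*Complex.exp (↑Real.pi * I * ((R 0 0 + R 2 2)/4) - ↑Real.pi * I * (R 0 2/2)) := by
  have h01 : R 1 0 = R 0 1 := congrFun (congrFun hR 0) 1
  have h02 : R 2 0 = R 0 2 := congrFun (congrFun hR 0) 2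
  have h12 : R 2 1 = R 1 2 := congrFun (congrFun hR 1) 2
  rw [Lfun, show Sfun ![1,0,1] = {![0,0,0], ![0,0,-1], ![-1,0,0], ![-1,0,-1]} from by decide]
  rw [Finset.sum_insert (by decide), Finset.sum_insert (by decide), Finset.sum_insert (by decide), Finset.sum_singleton]
  have e1 : pha R ![1,0,1] ![1,d1,1] ![0,0,0] = -Complex.exp (↑Real.pi * I * ((R 0 0 + R 2 2)/4) + ↑Real.pi * I * (R 0 2/2)) := by
    rw [pha, show -Complex.exp (↑Real.pi * I * ((R 0 0 + R 2 2)/4) + ↑Real.pi * I * (R 0 2/2)) = Complex.exp ((↑Real.pi * I * ((R 0 0 + R 2 2)/4) + ↑Real.pi * I * (R 0 2/2)) + ↑Real.pi * I) from (exp_add_pi _).symm]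
    congr 1
    simp only [w, Fin.sum_univ_three, Matrix.cons_val_zero, Matrix.cons_val_one,
      Matrix.cons_val_two, Matrix.head_cons, Matrix.vecHead, Matrix.vecTail, Function.comp_apply,
      Fin.succ_zero_eq_one, Fin.val_zero, Fin.val_one]
    push_cast
    linear_combination (↑Real.pi * I / 4) * h02
  have e2 : pha R ![1,0,1] ![1,d1,1] ![0,0,-1] = Complex.exp (↑Real.pi * I * ((R 0 0 + R 2 2)/4) - ↑Real.pi * I * (R 0 2/2)) := by
    rw [pha]
    congr 1
    simp only [w, Fin.sum_univ_three, Matrix.cons_val_zero, Matrix.cons_val_one,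
      Matrix.cons_val_two, Matrix.head_cons, Matrix.vecHead, Matrix.vecTail, Function.comp_apply,
      Fin.succ_zero_eq_one, Fin.val_zero, Fin.val_one]
    push_cast
    linear_combination (-(↑Real.pi * I) / 4) * h02
  have e3 : pha R ![1,0,1] ![1,d1,1] ![-1,0,0] = Complex.exp (↑Real.pi * I * ((R 0 0 + R 2 2)/4) - ↑Real.pi * I * (R 0 2/2)) := by
    rw [pha]
    congr 1
    simp only [w, Fin.sum_univ_three, Matrix.cons_val_zero, Matrix.cons_val_one,
      Matrix.cons_val_two, Matrix.head_cons, Matrix.vecHead, Matrix.vecTail, Function.comp_apply,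
      Fin.succ_zero_eq_one, Fin.val_zero, Fin.val_one]
    push_cast
    linear_combination (-(↑Real.pi * I) / 4) * h02
  have e4 : pha R ![1,0,1] ![1,d1,1] ![-1,0,-1] = -Complex.exp (↑Real.pi * I * ((R 0 0 + R 2 2)/4) + ↑Real.pi * I * (R 0 2/2)) := by
    rw [pha, show -Complex.exp (↑Real.pi * I * ((R 0 0 + R 2 2)/4) + ↑Real.pi * I * (R 0 2/2)) = Complex.exp ((↑Real.pi * I * ((R 0 0 + R 2 2)/4) + ↑Real.pi * I * (R 0 2/2)) - ↑Real.pi * I) from (exp_sub_pi _).symm]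
    congr 1
    simp only [w, Fin.sum_univ_three, Matrix.cons_val_zero, Matrix.cons_val_one,
      Matrix.cons_val_two, Matrix.head_cons, Matrix.vecHead, Matrix.vecTail, Function.comp_apply,
      Fin.succ_zero_eq_one, Fin.val_zero, Fin.val_one]
    push_cast
    linear_combination (↑Real.pi * I / 4) * h02
  rw [e1, e2, e3, e4]
  ring

lemma L011a (hR : R.IsSymm) (d0 : Fin 2) :
    Lfun R (![0,1,1], ![d0,0,0]) = 2*Complex.exp (↑Real.pi * I * ((R 1 1 + R 2 2)/4) + ↑Real.pi * I * (R 1 2/2)) + 2*Complex.exp (↑Real.pi * I * ((R 1 1 + R 2 2)/4) - ↑Real.pi * I * (R 1 2/2)) := by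
  have h01 : R 1 0 = R 0 1 := congrFun (congrFun hR 0) 1
  have h02 : R 2 0 = R 0 2 := congrFun (congrFun hR 0) 2
  have h12 : R 2 1 = R 1 2 := congrFun (congrFun hR 1) 2
  rw [Lfun, show Sfun ![0,1,1] = {![0,0,0], ![0,0,-1], ![0,-1,0], ![0,-1,-1]} from by decide]
  rw [Finset.sum_insert (by decide), Finset.sum_insert (by decide), Finset.sum_insert (by decide), Finset.sum_singleton]
  have e1 : pha R ![0,1,1] ![d0,0,0] ![0,0,0] = Complex.exp (↑Real.pi * I * ((R 1 1 + R 2 2)/4) + ↑Real.pi * I * (R 1 2/2)) := by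
    rw [pha]
    congr 1
    simp only [w, Fin.sum_univ_three, Matrix.cons_val_zero, Matrix.cons_val_one,
      Matrix.cons_val_two, Matrix.head_cons, Matrix.vecHead, Matrix.vecTail, Function.comp_apply,
      Fin.succ_zero_eq_one, Fin.val_zero, Fin.val_one]
    push_cast
    linear_combination (↑Real.pi * I / 4) * h12
  have e2 : pha R ![0,1,1] ![d0,0,0] ![0,0,-1] = Complex.exp (↑Real.pi * I * ((R 1 1 + R 2 2)/4) - ↑Real.pi * I * (R 1 2/2)) := by
    rw [pha]
    congr 1
    simp only [w, Fin.sum_univ_three, Matrix.cons_val_zero, Matrix.cons_val_one,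
      Matrix.cons_val_two, Matrix.head_cons, Matrix.vecHead, Matrix.vecTail, Function.comp_apply,
      Fin.succ_zero_eq_one, Fin.val_zero, Fin.val_one]
    push_cast
    linear_combination (-(↑Real.pi * I) / 4) * h12
  have e3 : pha R ![0,1,1] ![d0,0,0] ![0,-1,0] = Complex.exp (↑Real.pi * I * ((R 1 1 + R 2 2)/4) - ↑Real.pi * I * (R 1 2/2)) := by
    rw [pha]
    congr 1
    simp only [w, Fin.sum_univ_three, Matrix.cons_val_zero, Matrix.cons_val_one,
      Matrix.cons_val_two, Matrix.head_cons, Matrix.vecHead, Matrix.vecTail, Function.comp_apply,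
      Fin.succ_zero_eq_one, Fin.val_zero, Fin.val_one]
    push_cast
    linear_combination (-(↑Real.pi * I) / 4) * h12
  have e4 : pha R ![0,1,1] ![d0,0,0] ![0,-1,-1] = Complex.exp (↑Real.pi * I * ((R 1 1 + R 2 2)/4) + ↑Real.pi * I * (R 1 2/2)) := by
    rw [pha]
    congr 1
    simp only [w, Fin.sum_univ_three, Matrix.cons_val_zero, Matrix.cons_val_one,
      Matrix.cons_val_two, Matrix.head_cons, Matrix.vecHead, Matrix.vecTail, Function.comp_apply,
      Fin.succ_zero_eq_one, Fin.val_zero, Fin.val_one]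
    push_cast
    linear_combination (↑Real.pi * I / 4) * h12
  rw [e1, e2, e3, e4]
  ring

lemma L011b (hR : R.IsSymm) (d0 : Fin 2) :
    Lfun R (![0,1,1], ![d0,1,1]) = -(2*Complex.exp (↑Real.pi * I * ((R 1 1 + R 2 2)/4) + ↑Real.pi * I * (R 1 2/2))) + 2*Complex.exp (↑Real.pi * I * ((R 1 1 + R 2 2)/4) - ↑Real.pi * I * (R 1 2/2)) := by
  have h01 : R 1 0 = R 0 1 := congrFun (congrFun hR 0) 1
  have h02 : R 2 0 = R 0 2 := congrFun (congrFun hR 0) 2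
  have h12 : R 2 1 = R 1 2 := congrFun (congrFun hR 1) 2
  rw [Lfun, show Sfun ![0,1,1] = {![0,0,0], ![0,0,-1], ![0,-1,0], ![0,-1,-1]} from by decide]
  rw [Finset.sum_insert (by decide), Finset.sum_insert (by decide), Finset.sum_insert (by decide), Finset.sum_singleton]
  have e1 : pha R ![0,1,1] ![d0,1,1] ![0,0,0] = -Complex.exp (↑Real.pi * I * ((R 1 1 + R 2 2)/4) + ↑Real.pi * I * (R 1 2/2)) := by
    rw [pha, show -Complex.exp (↑Real.pi * I * ((R 1 1 + R 2 2)/4) + ↑Real.pi * I * (R 1 2/2)) = Complex.exp ((↑Real.pi * I * ((R 1 1 + R 2 2)/4) + ↑Real.pi * I * (R 1 2/2)) + ↑Real.pi * I) from (exp_add_pi _).symm]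
    congr 1
    simp only [w, Fin.sum_univ_three, Matrix.cons_val_zero, Matrix.cons_val_one,
      Matrix.cons_val_two, Matrix.head_cons, Matrix.vecHead, Matrix.vecTail, Function.comp_apply,
      Fin.succ_zero_eq_one, Fin.val_zero, Fin.val_one]
    push_cast
    linear_combination (↑Real.pi * I / 4) * h12
  have e2 : pha R ![0,1,1] ![d0,1,1] ![0,0,-1] = Complex.exp (↑Real.pi * I * ((R 1 1 + R 2 2)/4) - ↑Real.pi * I * (R 1 2/2)) := by
    rw [pha]
    congr 1
    simp only [w, Fin.sum_univ_three, Matrix.cons_val_zero, Matrix.cons_val_one,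
      Matrix.cons_val_two, Matrix.head_cons, Matrix.vecHead, Matrix.vecTail, Function.comp_apply,
      Fin.succ_zero_eq_one, Fin.val_zero, Fin.val_one]
    push_cast
    linear_combination (-(↑Real.pi * I) / 4) * h12
  have e3 : pha R ![0,1,1] ![d0,1,1] ![0,-1,0] = Complex.exp (↑Real.pi * I * ((R 1 1 + R 2 2)/4) - ↑Real.pi * I * (R 1 2/2)) := by
    rw [pha]
    congr 1
    simp only [w, Fin.sum_univ_three, Matrix.cons_val_zero, Matrix.cons_val_one,
      Matrix.cons_val_two, Matrix.head_cons, Matrix.vecHead, Matrix.vecTail, Function.comp_apply,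
      Fin.succ_zero_eq_one, Fin.val_zero, Fin.val_one]
    push_cast
    linear_combination (-(↑Real.pi * I) / 4) * h12
  have e4 : pha R ![0,1,1] ![d0,1,1] ![0,-1,-1] = -Complex.exp (↑Real.pi * I * ((R 1 1 + R 2 2)/4) + ↑Real.pi * I * (R 1 2/2)) := by
    rw [pha, show -Complex.exp (↑Real.pi * I * ((R 1 1 + R 2 2)/4) + ↑Real.pi * I * (R 1 2/2)) = Complex.exp ((↑Real.pi * I * ((R 1 1 + R 2 2)/4) + ↑Real.pi * I * (R 1 2/2)) - ↑Real.pi * I) from (exp_sub_pi _).symm]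
    congr 1
    simp only [w, Fin.sum_univ_three, Matrix.cons_val_zero, Matrix.cons_val_one,
      Matrix.cons_val_two, Matrix.head_cons, Matrix.vecHead, Matrix.vecTail, Function.comp_apply,
      Fin.succ_zero_eq_one, Fin.val_zero, Fin.val_one]
    push_cast
    linear_combination (↑Real.pi * I / 4) * h12
  rw [e1, e2, e3, e4]
  ring

lemma L111a (hR : R.IsSymm) :
    Lfun R (![1,1,1], ![0,0,0]) = 2*Complex.exp (↑Real.pi * I * ((R 0 0 + 2*R 0 1 + R 1 1 + R 2 2)/4) + ↑Real.pi * I * ((R 0 2 + R 1 2)/2)) + 2*Complex.exp (↑Real.pi * I * ((R 0 0 + 2*R 0 1 + R 1 1 + R 2 2)/4) - ↑Real.pi * I * ((R 0 2 + R 1 2)/2)) := by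
  have h01 : R 1 0 = R 0 1 := congrFun (congrFun hR 0) 1
  have h02 : R 2 0 = R 0 2 := congrFun (congrFun hR 0) 2
  have h12 : R 2 1 = R 1 2 := congrFun (congrFun hR 1) 2
  rw [Lfun, show Sfun ![1,1,1] = {![0,0,0], ![0,0,-1], ![-1,-1,0], ![-1,-1,-1]} from by decide]
  rw [Finset.sum_insert (by decide), Finset.sum_insert (by decide), Finset.sum_insert (by decide), Finset.sum_singleton]
  have e1 : pha R ![1,1,1] ![0,0,0] ![0,0,0] = Complex.exp (↑Real.pi * I * ((R 0 0 + 2*R 0 1 + R 1 1 + R 2 2)/4) + ↑Real.pi * I * ((R 0 2 + R 1 2)/2)) := by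
    rw [pha]
    congr 1
    simp only [w, Fin.sum_univ_three, Matrix.cons_val_zero, Matrix.cons_val_one,
      Matrix.cons_val_two, Matrix.head_cons, Matrix.vecHead, Matrix.vecTail, Function.comp_apply,
      Fin.succ_zero_eq_one, Fin.val_zero, Fin.val_one]
    push_cast
    linear_combination (↑Real.pi * I / 4) * h01 + (↑Real.pi * I / 4) * h02 + (↑Real.pi * I / 4) * h12
  have e2 : pha R ![1,1,1] ![0,0,0] ![0,0,-1] = Complex.exp (↑Real.pi * I * ((R 0 0 + 2*R 0 1 + R 1 1 + R 2 2)/4) - ↑Real.pi * I * ((R 0 2 + R 1 2)/2)) := by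
    rw [pha]
    congr 1
    simp only [w, Fin.sum_univ_three, Matrix.cons_val_zero, Matrix.cons_val_one,
      Matrix.cons_val_two, Matrix.head_cons, Matrix.vecHead, Matrix.vecTail, Function.comp_apply,
      Fin.succ_zero_eq_one, Fin.val_zero, Fin.val_one]
    push_cast
    linear_combination (↑Real.pi * I / 4) * h01 + (-(↑Real.pi * I) / 4) * h02 + (-(↑Real.pi * I) / 4) * h12
  have e3 : pha R ![1,1,1] ![0,0,0] ![-1,-1,0] = Complex.exp (↑Real.pi * I * ((R 0 0 + 2*R 0 1 + R 1 1 + R 2 2)/4) - ↑Real.pi * I * ((R 0 2 + R 1 2)/2)) := by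
    rw [pha]
    congr 1
    simp only [w, Fin.sum_univ_three, Matrix.cons_val_zero, Matrix.cons_val_one,
      Matrix.cons_val_two, Matrix.head_cons, Matrix.vecHead, Matrix.vecTail, Function.comp_apply,
      Fin.succ_zero_eq_one, Fin.val_zero, Fin.val_one]
    push_cast
    linear_combination (↑Real.pi * I / 4) * h01 + (-(↑Real.pi * I) / 4) * h02 + (-(↑Real.pi * I) / 4) * h12
  have e4 : pha R ![1,1,1] ![0,0,0] ![-1,-1,-1] = Complex.exp (↑Real.pi * I * ((R 0 0 + 2*R 0 1 + R 1 1 + R 2 2)/4) + ↑Real.pi * I * ((R 0 2 + R 1 2)/2)) := by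
    rw [pha]
    congr 1
    simp only [w, Fin.sum_univ_three, Matrix.cons_val_zero, Matrix.cons_val_one,
      Matrix.cons_val_two, Matrix.head_cons, Matrix.vecHead, Matrix.vecTail, Function.comp_apply,
      Fin.succ_zero_eq_one, Fin.val_zero, Fin.val_one]
    push_cast
    linear_combination (↑Real.pi * I / 4) * h01 + (↑Real.pi * I / 4) * h02 + (↑Real.pi * I / 4) * h12
  rw [e1, e2, e3, e4]
  ring

lemma L111b (hR : R.IsSymm) :
    Lfun R (![1,1,1], ![1,1,0]) = -(2*Complex.exp (↑Real.pi * I * ((R 0 0 + 2*R 0 1 + R 1 1 + R 2 2)/4) + ↑Real.pi * I * ((R 0 2 + R 1 2)/2))) - 2*Complex.exp (↑Real.pi * I * ((R 0 0 + 2*R 0 1 + R 1 1 + R 2 2)/4) - ↑Real.pi * I * ((R 0 2 + R 1 2)/2)) := by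
  have h01 : R 1 0 = R 0 1 := congrFun (congrFun hR 0) 1
  have h02 : R 2 0 = R 0 2 := congrFun (congrFun hR 0) 2
  have h12 : R 2 1 = R 1 2 := congrFun (congrFun hR 1) 2
  rw [Lfun, show Sfun ![1,1,1] = {![0,0,0], ![0,0,-1], ![-1,-1,0], ![-1,-1,-1]} from by decide]
  rw [Finset.sum_insert (by decide), Finset.sum_insert (by decide), Finset.sum_insert (by decide), Finset.sum_singleton]
  have e1 : pha R ![1,1,1] ![1,1,0] ![0,0,0] = -Complex.exp (↑Real.pi * I * ((R 0 0 + 2*R 0 1 + R 1 1 + R 2 2)/4) + ↑Real.pi * I * ((R 0 2 + R 1 2)/2)) := by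
    rw [pha, show -Complex.exp (↑Real.pi * I * ((R 0 0 + 2*R 0 1 + R 1 1 + R 2 2)/4) + ↑Real.pi * I * ((R 0 2 + R 1 2)/2)) = Complex.exp ((↑Real.pi * I * ((R 0 0 + 2*R 0 1 + R 1 1 + R 2 2)/4) + ↑Real.pi * I * ((R 0 2 + R 1 2)/2)) + ↑Real.pi * I) from (exp_add_pi _).symm]
    congr 1
    simp only [w, Fin.sum_univ_three, Matrix.cons_val_zero, Matrix.cons_val_one,
      Matrix.cons_val_two, Matrix.head_cons, Matrix.vecHead, Matrix.vecTail, Function.comp_apply,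
      Fin.succ_zero_eq_one, Fin.val_zero, Fin.val_one]
    push_cast
    linear_combination (↑Real.pi * I / 4) * h01 + (↑Real.pi * I / 4) * h02 + (↑Real.pi * I / 4) * h12
  have e2 : pha R ![1,1,1] ![1,1,0] ![0,0,-1] = -Complex.exp (↑Real.pi * I * ((R 0 0 + 2*R 0 1 + R 1 1 + R 2 2)/4) - ↑Real.pi * I * ((R 0 2 + R 1 2)/2)) := by
    rw [pha, show -Complex.exp (↑Real.pi * I * ((R 0 0 + 2*R 0 1 + R 1 1 + R 2 2)/4) - ↑Real.pi * I * ((R 0 2 + R 1 2)/2)) = Complex.exp ((↑Real.pi * I * ((R 0 0 + 2*R 0 1 + R 1 1 + R 2 2)/4) - ↑Real.pi * I * ((R 0 2 + R 1 2)/2)) + ↑Real.pi * I) from (exp_add_pi _).symm]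
    congr 1
    simp only [w, Fin.sum_univ_three, Matrix.cons_val_zero, Matrix.cons_val_one,
      Matrix.cons_val_two, Matrix.head_cons, Matrix.vecHead, Matrix.vecTail, Function.comp_apply,
      Fin.succ_zero_eq_one, Fin.val_zero, Fin.val_one]
    push_cast
    linear_combination (↑Real.pi * I / 4) * h01 + (-(↑Real.pi * I) / 4) * h02 + (-(↑Real.pi * I) / 4) * h12
  have e3 : pha R ![1,1,1] ![1,1,0] ![-1,-1,0] = -Complex.exp (↑Real.pi * I * ((R 0 0 + 2*R 0 1 + R 1 1 + R 2 2)/4) - ↑Real.pi * I * ((R 0 2 + R 1 2)/2)) := by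
    rw [pha, show -Complex.exp (↑Real.pi * I * ((R 0 0 + 2*R 0 1 + R 1 1 + R 2 2)/4) - ↑Real.pi * I * ((R 0 2 + R 1 2)/2)) = Complex.exp ((↑Real.pi * I * ((R 0 0 + 2*R 0 1 + R 1 1 + R 2 2)/4) - ↑Real.pi * I * ((R 0 2 + R 1 2)/2)) - ↑Real.pi * I) from (exp_sub_pi _).symm]
    congr 1
    simp only [w, Fin.sum_univ_three, Matrix.cons_val_zero, Matrix.cons_val_one,
      Matrix.cons_val_two, Matrix.head_cons, Matrix.vecHead, Matrix.vecTail, Function.comp_apply,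
      Fin.succ_zero_eq_one, Fin.val_zero, Fin.val_one]
    push_cast
    linear_combination (↑Real.pi * I / 4) * h01 + (-(↑Real.pi * I) / 4) * h02 + (-(↑Real.pi * I) / 4) * h12
  have e4 : pha R ![1,1,1] ![1,1,0] ![-1,-1,-1] = -Complex.exp (↑Real.pi * I * ((R 0 0 + 2*R 0 1 + R 1 1 + R 2 2)/4) + ↑Real.pi * I * ((R 0 2 + R 1 2)/2)) := by
    rw [pha, show -Complex.exp (↑Real.pi * I * ((R 0 0 + 2*R 0 1 + R 1 1 + R 2 2)/4) + ↑Real.pi * I * ((R 0 2 + R 1 2)/2)) = Complex.exp ((↑Real.pi * I * ((R 0 0 + 2*R 0 1 + R 1 1 + R 2 2)/4) + ↑Real.pi * I * ((R 0 2 + R 1 2)/2)) - ↑Real.pi * I) from (exp_sub_pi _).symm]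
    congr 1
    simp only [w, Fin.sum_univ_three, Matrix.cons_val_zero, Matrix.cons_val_one,
      Matrix.cons_val_two, Matrix.head_cons, Matrix.vecHead, Matrix.vecTail, Function.comp_apply,
      Fin.succ_zero_eq_one, Fin.val_zero, Fin.val_one]
    push_cast
    linear_combination (↑Real.pi * I / 4) * h01 + (↑Real.pi * I / 4) * h02 + (↑Real.pi * I / 4) * h12
  rw [e1, e2, e3, e4]
  ring

lemma L111c (hR : R.IsSymm) :
    Lfun R (![1,1,1], ![1,0,1]) = -(2*Complex.exp (↑Real.pi * I * ((R 0 0 + 2*R 0 1 + R 1 1 + R 2 2)/4) + ↑Real.pi * I * ((R 0 2 + R 1 2)/2))) + 2*Complex.exp (↑Real.pi * I * ((R 0 0 + 2*R 0 1 + R 1 1 + R 2 2)/4) - ↑Real.pi * I * ((R 0 2 + R 1 2)/2)) := by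
  have h01 : R 1 0 = R 0 1 := congrFun (congrFun hR 0) 1
  have h02 : R 2 0 = R 0 2 := congrFun (congrFun hR 0) 2
  have h12 : R 2 1 = R 1 2 := congrFun (congrFun hR 1) 2
  rw [Lfun, show Sfun ![1,1,1] = {![0,0,0], ![0,0,-1], ![-1,-1,0], ![-1,-1,-1]} from by decide]
  rw [Finset.sum_insert (by decide), Finset.sum_insert (by decide), Finset.sum_insert (by decide), Finset.sum_singleton]
  have e1 : pha R ![1,1,1] ![1,0,1] ![0,0,0] = -Complex.exp (↑Real.pi * I * ((R 0 0 + 2*R 0 1 + R 1 1 + R 2 2)/4) + ↑Real.pi * I * ((R 0 2 + R 1 2)/2)) := by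
    rw [pha, show -Complex.exp (↑Real.pi * I * ((R 0 0 + 2*R 0 1 + R 1 1 + R 2 2)/4) + ↑Real.pi * I * ((R 0 2 + R 1 2)/2)) = Complex.exp ((↑Real.pi * I * ((R 0 0 + 2*R 0 1 + R 1 1 + R 2 2)/4) + ↑Real.pi * I * ((R 0 2 + R 1 2)/2)) + ↑Real.pi * I) from (exp_add_pi _).symm]
    congr 1
    simp only [w, Fin.sum_univ_three, Matrix.cons_val_zero, Matrix.cons_val_one,
      Matrix.cons_val_two, Matrix.head_cons, Matrix.vecHead, Matrix.vecTail, Function.comp_apply,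
      Fin.succ_zero_eq_one, Fin.val_zero, Fin.val_one]
    push_cast
    linear_combination (↑Real.pi * I / 4) * h01 + (↑Real.pi * I / 4) * h02 + (↑Real.pi * I / 4) * h12
  have e2 : pha R ![1,1,1] ![1,0,1] ![0,0,-1] = Complex.exp (↑Real.pi * I * ((R 0 0 + 2*R 0 1 + R 1 1 + R 2 2)/4) - ↑Real.pi * I * ((R 0 2 + R 1 2)/2)) := by
    rw [pha]
    congr 1
    simp only [w, Fin.sum_univ_three, Matrix.cons_val_zero, Matrix.cons_val_one,
      Matrix.cons_val_two, Matrix.head_cons, Matrix.vecHead, Matrix.vecTail, Function.comp_apply,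
      Fin.succ_zero_eq_one, Fin.val_zero, Fin.val_one]
    push_cast
    linear_combination (↑Real.pi * I / 4) * h01 + (-(↑Real.pi * I) / 4) * h02 + (-(↑Real.pi * I) / 4) * h12
  have e3 : pha R ![1,1,1] ![1,0,1] ![-1,-1,0] = Complex.exp (↑Real.pi * I * ((R 0 0 + 2*R 0 1 + R 1 1 + R 2 2)/4) - ↑Real.pi * I * ((R 0 2 + R 1 2)/2)) := by
    rw [pha]
    congr 1
    simp only [w, Fin.sum_univ_three, Matrix.cons_val_zero, Matrix.cons_val_one,
      Matrix.cons_val_two, Matrix.head_cons, Matrix.vecHead, Matrix.vecTail, Function.comp_apply,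
      Fin.succ_zero_eq_one, Fin.val_zero, Fin.val_one]
    push_cast
    linear_combination (↑Real.pi * I / 4) * h01 + (-(↑Real.pi * I) / 4) * h02 + (-(↑Real.pi * I) / 4) * h12
  have e4 : pha R ![1,1,1] ![1,0,1] ![-1,-1,-1] = -Complex.exp (↑Real.pi * I * ((R 0 0 + 2*R 0 1 + R 1 1 + R 2 2)/4) + ↑Real.pi * I * ((R 0 2 + R 1 2)/2)) := by
    rw [pha, show -Complex.exp (↑Real.pi * I * ((R 0 0 + 2*R 0 1 + R 1 1 + R 2 2)/4) + ↑Real.pi * I * ((R 0 2 + R 1 2)/2)) = Complex.exp ((↑Real.pi * I * ((R 0 0 + 2*R 0 1 + R 1 1 + R 2 2)/4) + ↑Real.pi * I * ((R 0 2 + R 1 2)/2)) - ↑Real.pi * I) from (exp_sub_pi _).symm]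
    congr 1
    simp only [w, Fin.sum_univ_three, Matrix.cons_val_zero, Matrix.cons_val_one,
      Matrix.cons_val_two, Matrix.head_cons, Matrix.vecHead, Matrix.vecTail, Function.comp_apply,
      Fin.succ_zero_eq_one, Fin.val_zero, Fin.val_one]
    push_cast
    linear_combination (↑Real.pi * I / 4) * h01 + (↑Real.pi * I / 4) * h02 + (↑Real.pi * I / 4) * h12
  rw [e1, e2, e3, e4]
  ring

lemma L111d (hR : R.IsSymm) :
    Lfun R (![1,1,1], ![0,1,1]) = -(2*Complex.exp (↑Real.pi * I * ((R 0 0 + 2*R 0 1 + R 1 1 + R 2 2)/4) + ↑Real.pi * I * ((R 0 2 + R 1 2)/2))) + 2*Complex.exp (↑Real.pi * I * ((R 0 0 + 2*R 0 1 + R 1 1 + R 2 2)/4) - ↑Real.pi * I * ((R 0 2 + R 1 2)/2)) := by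
  have h01 : R 1 0 = R 0 1 := congrFun (congrFun hR 0) 1
  have h02 : R 2 0 = R 0 2 := congrFun (congrFun hR 0) 2
  have h12 : R 2 1 = R 1 2 := congrFun (congrFun hR 1) 2
  rw [Lfun, show Sfun ![1,1,1] = {![0,0,0], ![0,0,-1], ![-1,-1,0], ![-1,-1,-1]} from by decide]
  rw [Finset.sum_insert (by decide), Finset.sum_insert (by decide), Finset.sum_insert (by decide), Finset.sum_singleton]
  have e1 : pha R ![1,1,1] ![0,1,1] ![0,0,0] = -Complex.exp (↑Real.pi * I * ((R 0 0 + 2*R 0 1 + R 1 1 + R 2 2)/4) + ↑Real.pi * I * ((R 0 2 + R 1 2)/2)) := by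
    rw [pha, show -Complex.exp (↑Real.pi * I * ((R 0 0 + 2*R 0 1 + R 1 1 + R 2 2)/4) + ↑Real.pi * I * ((R 0 2 + R 1 2)/2)) = Complex.exp ((↑Real.pi * I * ((R 0 0 + 2*R 0 1 + R 1 1 + R 2 2)/4) + ↑Real.pi * I * ((R 0 2 + R 1 2)/2)) + ↑Real.pi * I) from (exp_add_pi _).symm]
    congr 1
    simp only [w, Fin.sum_univ_three, Matrix.cons_val_zero, Matrix.cons_val_one,
      Matrix.cons_val_two, Matrix.head_cons, Matrix.vecHead, Matrix.vecTail, Function.comp_apply,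
      Fin.succ_zero_eq_one, Fin.val_zero, Fin.val_one]
    push_cast
    linear_combination (↑Real.pi * I / 4) * h01 + (↑Real.pi * I / 4) * h02 + (↑Real.pi * I / 4) * h12
  have e2 : pha R ![1,1,1] ![0,1,1] ![0,0,-1] = Complex.exp (↑Real.pi * I * ((R 0 0 + 2*R 0 1 + R 1 1 + R 2 2)/4) - ↑Real.pi * I * ((R 0 2 + R 1 2)/2)) := by
    rw [pha]
    congr 1
    simp only [w, Fin.sum_univ_three, Matrix.cons_val_zero, Matrix.cons_val_one,
      Matrix.cons_val_two, Matrix.head_cons, Matrix.vecHead, Matrix.vecTail, Function.comp_apply,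
      Fin.succ_zero_eq_one, Fin.val_zero, Fin.val_one]
    push_cast
    linear_combination (↑Real.pi * I / 4) * h01 + (-(↑Real.pi * I) / 4) * h02 + (-(↑Real.pi * I) / 4) * h12
  have e3 : pha R ![1,1,1] ![0,1,1] ![-1,-1,0] = Complex.exp (↑Real.pi * I * ((R 0 0 + 2*R 0 1 + R 1 1 + R 2 2)/4) - ↑Real.pi * I * ((R 0 2 + R 1 2)/2)) := by
    rw [pha]
    congr 1
    simp only [w, Fin.sum_univ_three, Matrix.cons_val_zero, Matrix.cons_val_one,
      Matrix.cons_val_two, Matrix.head_cons, Matrix.vecHead, Matrix.vecTail, Function.comp_apply,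
      Fin.succ_zero_eq_one, Fin.val_zero, Fin.val_one]
    push_cast
    linear_combination (↑Real.pi * I / 4) * h01 + (-(↑Real.pi * I) / 4) * h02 + (-(↑Real.pi * I) / 4) * h12
  have e4 : pha R ![1,1,1] ![0,1,1] ![-1,-1,-1] = -Complex.exp (↑Real.pi * I * ((R 0 0 + 2*R 0 1 + R 1 1 + R 2 2)/4) + ↑Real.pi * I * ((R 0 2 + R 1 2)/2)) := by
    rw [pha, show -Complex.exp (↑Real.pi * I * ((R 0 0 + 2*R 0 1 + R 1 1 + R 2 2)/4) + ↑Real.pi * I * ((R 0 2 + R 1 2)/2)) = Complex.exp ((↑Real.pi * I * ((R 0 0 + 2*R 0 1 + R 1 1 + R 2 2)/4) + ↑Real.pi * I * ((R 0 2 + R 1 2)/2)) - ↑Real.pi * I) from (exp_sub_pi _).symm]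
    congr 1
    simp only [w, Fin.sum_univ_three, Matrix.cons_val_zero, Matrix.cons_val_one,
      Matrix.cons_val_two, Matrix.head_cons, Matrix.vecHead, Matrix.vecTail, Function.comp_apply,
      Fin.succ_zero_eq_one, Fin.val_zero, Fin.val_one]
    push_cast
    linear_combination (↑Real.pi * I / 4) * h01 + (↑Real.pi * I / 4) * h02 + (↑Real.pi * I / 4) * h12
  rw [e1, e2, e3, e4]
  ring

lemma fin2 (x : Fin 2) : x = 0 ∨ x = 1 := by
  fin_cases x
  · exact Or.inl rfl
  · exact Or.inr rfl

lemma z1 (C X : ℂ) : 2*Complex.exp (C+X) + 2*Complex.exp (C-X) = 0 ↔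
    Complex.exp (2*X) = -1 := by
  have hb := Complex.exp_ne_zero (C-X)
  have key : Complex.exp (C+X) = Complex.exp (C-X) * Complex.exp (2*X) := by
    rw [← Complex.exp_add]; congr 1; ring
  constructor
  · intro h
    rw [key] at h
    have h2 : Complex.exp (C-X) * (2*Complex.exp (2*X) + 2) = 0 := by linear_combination h
    rcases mul_eq_zero.1 h2 with h3|h3
    · exact absurd h3 hb
    · linear_combination h3/2
  · intro h
    rw [key, h]; ring

lemma z2 (C X : ℂ) : -(2*Complex.exp (C+X)) + 2*Complex.exp (C-X) = 0 ↔
    Complex.exp (2*X) = 1 := by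
  have hb := Complex.exp_ne_zero (C-X)
  have key : Complex.exp (C+X) = Complex.exp (C-X) * Complex.exp (2*X) := by
    rw [← Complex.exp_add]; congr 1; ring
  constructor
  · intro h
    rw [key] at h
    have h2 : Complex.exp (C-X) * (2 - 2*Complex.exp (2*X)) = 0 := by linear_combination h
    rcases mul_eq_zero.1 h2 with h3|h3
    · exact absurd h3 hb
    · linear_combination (-1/2 : ℂ)*h3
  · intro h
    rw [key, h]; ring

lemma Lzero (hR : R.IsSymm) :
    (∏ c ∈ evens, Lfun R c) = 0 ↔
      (Complex.exp (2 * ↑Real.pi * I * R 0 2) - 1) *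
        (Complex.exp (2 * ↑Real.pi * I * R 1 2) - 1) *
        (Complex.exp (2 * ↑Real.pi * I * R 0 2) *
          Complex.exp (2 * ↑Real.pi * I * R 1 2) - 1) = 0 := by
  have hP2 : Complex.exp (2 * ↑Real.pi * I * R 0 2)
      = Complex.exp (↑Real.pi * I * R 0 2) * Complex.exp (↑Real.pi * I * R 0 2) := by
    rw [← Complex.exp_add]; congr 1; ring
  have hQ2 : Complex.exp (2 * ↑Real.pi * I * R 1 2)
      = Complex.exp (↑Real.pi * I * R 1 2) * Complex.exp (↑Real.pi * I * R 1 2) := by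
    rw [← Complex.exp_add]; congr 1; ring
  have hW2 : Complex.exp (2 * ↑Real.pi * I * R 0 2) * Complex.exp (2 * ↑Real.pi * I * R 1 2)
      = Complex.exp (↑Real.pi * I * (R 0 2 + R 1 2))
        * Complex.exp (↑Real.pi * I * (R 0 2 + R 1 2)) := by
    rw [← Complex.exp_add, ← Complex.exp_add]; congr 1; ring
  constructor
  · intro h
    obtain ⟨c, hc, hL⟩ := Finset.prod_eq_zero_iff.1 h
    obtain ⟨ε, δ⟩ := c
    obtain ⟨a, b, c3, rfl⟩ : ∃ x y z, ε = ![x,y,z] := ⟨_,_,_, vec3_eta ε⟩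
    obtain ⟨d, e, f, rfl⟩ : ∃ x y z, δ = ![x,y,z] := ⟨_,_,_, vec3_eta δ⟩
    rcases fin2 a with rfl|rfl <;> rcases fin2 b with rfl|rfl <;> rcases fin2 c3 with rfl|rfl <;>
      rcases fin2 d with rfl|rfl <;> rcases fin2 e with rfl|rfl <;> rcases fin2 f with rfl|rfl
    all_goals try exact absurd hc (by decide)
    all_goals try (rw [L000 R] at hL; exact absurd hL one_ne_zero)
    all_goals try (rw [L001 R] at hL; simp [Complex.exp_ne_zero] at hL)
    all_goals try (rw [L100 R] at hL; simp [Complex.exp_ne_zero] at hL)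
    all_goals try (rw [L010 R] at hL; simp [Complex.exp_ne_zero] at hL)
    all_goals try (rw [L110a R hR] at hL; simp [Complex.exp_ne_zero] at hL)
    all_goals try (rw [L110b R hR] at hL; simp [Complex.exp_ne_zero] at hL)
    all_goals try (
      rw [L101a R hR] at hL
      have h1 := (z1 _ _).1 hL
      rw [show (2*(↑Real.pi * I * (R 0 2/2))) = ↑Real.pi * I * R 0 2 from by ring] at h1
      rw [hP2, h1]; ring)
    all_goals try (
      rw [L101b R hR] at hL
      have h1 := (z2 _ _).1 hL
      rw [show (2*(↑Real.pi * I * (R 0 2/2))) = ↑Real.pi * I * R 0 2 from by ring] at h1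
      rw [hP2, h1]; ring)
    all_goals try (
      rw [L011a R hR] at hL
      have h1 := (z1 _ _).1 hL
      rw [show (2*(↑Real.pi * I * (R 1 2/2))) = ↑Real.pi * I * R 1 2 from by ring] at h1
      rw [hQ2, h1]; ring)
    all_goals try (
      rw [L011b R hR] at hL
      have h1 := (z2 _ _).1 hL
      rw [show (2*(↑Real.pi * I * (R 1 2/2))) = ↑Real.pi * I * R 1 2 from by ring] at h1
      rw [hQ2, h1]; ring)
    all_goals try (
      rw [L111a R hR] at hL
      have h1 := (z1 _ _).1 hL
      rw [show (2*(↑Real.pi * I * ((R 0 2 + R 1 2)/2))) = ↑Real.pi * I * (R 0 2 + R 1 2)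
        from by ring] at h1
      rw [hW2, h1]; ring)
    all_goals try (
      rw [L111c R hR] at hL
      have h1 := (z2 _ _).1 hL
      rw [show (2*(↑Real.pi * I * ((R 0 2 + R 1 2)/2))) = ↑Real.pi * I * (R 0 2 + R 1 2)
        from by ring] at h1
      rw [hW2, h1]; ring)
    all_goals try (
      rw [L111d R hR] at hL
      have h1 := (z2 _ _).1 hL
      rw [show (2*(↑Real.pi * I * ((R 0 2 + R 1 2)/2))) = ↑Real.pi * I * (R 0 2 + R 1 2)
        from by ring] at h1
      rw [hW2, h1]; ring)
    all_goals (
      rw [L111b R hR] at hL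
      have h1 : 2*Complex.exp (↑Real.pi * I * ((R 0 0 + 2*R 0 1 + R 1 1 + R 2 2)/4)
          + ↑Real.pi * I * ((R 0 2 + R 1 2)/2))
          + 2*Complex.exp (↑Real.pi * I * ((R 0 0 + 2*R 0 1 + R 1 1 + R 2 2)/4)
          - ↑Real.pi * I * ((R 0 2 + R 1 2)/2)) = 0 := by linear_combination -hL
      have h2 := (z1 _ _).1 h1
      rw [show (2*(↑Real.pi * I * ((R 0 2 + R 1 2)/2))) = ↑Real.pi * I * (R 0 2 + R 1 2)
        from by ring] at h2
      rw [hW2, h2]; ring)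
  · intro h
    rcases mul_eq_zero.1 h with h'|h3
    · rcases mul_eq_zero.1 h' with h1|h2
      · have hPP : Complex.exp (↑Real.pi * I * R 0 2) * Complex.exp (↑Real.pi * I * R 0 2)
            = 1 := by rw [← hP2]; exact sub_eq_zero.1 h1
        have hfac : (Complex.exp (↑Real.pi * I * R 0 2) - 1)
            * (Complex.exp (↑Real.pi * I * R 0 2) + 1) = 0 := by linear_combination hPP
        rcases mul_eq_zero.1 hfac with hf|hf
        · apply Finset.prod_eq_zero
            (show ((![1,0,1], ![1,0,1]) : (Fin 3 → Fin 2) × (Fin 3 → Fin 2)) ∈ evens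
              from by decide)
          rw [L101b R hR]
          apply (z2 _ _).2
          rw [show (2*(↑Real.pi * I * (R 0 2/2))) = ↑Real.pi * I * R 0 2 from by ring]
          exact sub_eq_zero.1 hf
        · apply Finset.prod_eq_zero
            (show ((![1,0,1], ![0,0,0]) : (Fin 3 → Fin 2) × (Fin 3 → Fin 2)) ∈ evens
              from by decide)
          rw [L101a R hR]
          apply (z1 _ _).2
          rw [show (2*(↑Real.pi * I * (R 0 2/2))) = ↑Real.pi * I * R 0 2 from by ring]
          exact eq_neg_of_add_eq_zero_left hf
      · have hPP : Complex.exp (↑Real.pi * I * R 1 2) * Complex.exp (↑Real.pi * I * R 1 2)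
            = 1 := by rw [← hQ2]; exact sub_eq_zero.1 h2
        have hfac : (Complex.exp (↑Real.pi * I * R 1 2) - 1)
            * (Complex.exp (↑Real.pi * I * R 1 2) + 1) = 0 := by linear_combination hPP
        rcases mul_eq_zero.1 hfac with hf|hf
        · apply Finset.prod_eq_zero
            (show ((![0,1,1], ![0,1,1]) : (Fin 3 → Fin 2) × (Fin 3 → Fin 2)) ∈ evens
              from by decide)
          rw [L011b R hR]
          apply (z2 _ _).2
          rw [show (2*(↑Real.pi * I * (R 1 2/2))) = ↑Real.pi * I * R 1 2 from by ring]
          exact sub_eq_zero.1 hf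
        · apply Finset.prod_eq_zero
            (show ((![0,1,1], ![0,0,0]) : (Fin 3 → Fin 2) × (Fin 3 → Fin 2)) ∈ evens
              from by decide)
          rw [L011a R hR]
          apply (z1 _ _).2
          rw [show (2*(↑Real.pi * I * (R 1 2/2))) = ↑Real.pi * I * R 1 2 from by ring]
          exact eq_neg_of_add_eq_zero_left hf
    · have hWW : Complex.exp (↑Real.pi * I * (R 0 2 + R 1 2))
          * Complex.exp (↑Real.pi * I * (R 0 2 + R 1 2)) = 1 := by
        rw [← hW2]; exact sub_eq_zero.1 h3
      have hfac : (Complex.exp (↑Real.pi * I * (R 0 2 + R 1 2)) - 1)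
          * (Complex.exp (↑Real.pi * I * (R 0 2 + R 1 2)) + 1) = 0 := by linear_combination hWW
      rcases mul_eq_zero.1 hfac with hf|hf
      · apply Finset.prod_eq_zero
          (show ((![1,1,1], ![1,0,1]) : (Fin 3 → Fin 2) × (Fin 3 → Fin 2)) ∈ evens
            from by decide)
        rw [L111c R hR]
        apply (z2 _ _).2
        rw [show (2*(↑Real.pi * I * ((R 0 2 + R 1 2)/2))) = ↑Real.pi * I * (R 0 2 + R 1 2)
          from by ring]
        exact sub_eq_zero.1 hf
      · apply Finset.prod_eq_zero
          (show ((![1,1,1], ![0,0,0]) : (Fin 3 → Fin 2) × (Fin 3 → Fin 2)) ∈ evens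
            from by decide)
        rw [L111a R hR]
        apply (z1 _ _).2
        rw [show (2*(↑Real.pi * I * ((R 0 2 + R 1 2)/2))) = ↑Real.pi * I * (R 0 2 + R 1 2)
          from by ring]
        exact eq_neg_of_add_eq_zero_left hf

end ST9

/-- Lowest order behavior of the theta-null along the cone `σ_{K₃+1}`. -/
theorem stmt_9 (R : Matrix (Fin 3) (Fin 3) ℂ) (hR : R.IsSymm) :
    (∀ᶠ y : ℝ in Filter.atTop, SiegelUpper 3 ((I * (y : ℂ)) • EK31 + R)) ∧
    ∃ L : ℂ,
      Filter.Tendsto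
        (fun y : ℝ => (Real.exp (16 * Real.pi * y) : ℂ) *
          thetaNull3 ((I * (y : ℂ)) • EK31 + R))
        Filter.atTop (nhds L) ∧
      (L = 0 ↔
        (Complex.exp (2 * ↑Real.pi * I * R 0 2) - 1) *
          (Complex.exp (2 * ↑Real.pi * I * R 1 2) - 1) *
          (Complex.exp (2 * ↑Real.pi * I * R 0 2) *
            Complex.exp (2 * ↑Real.pi * I * R 1 2) - 1) = 0) := by
  constructor
  · exact ST9.siegel R hR
  · refine ⟨∏ c ∈ ST9.evens, ST9.Lfun R c, ?_, ST9.Lzero R hR⟩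
    have h1 : ∀ c ∈ ST9.evens,
        Filter.Tendsto (fun y : ℝ => Complex.exp (↑Real.pi * ↑(ST9.mR c.1) * ↑y) *
          theta 3 (fun j => ((c.1 j).val : ℤ)) (fun j => ((c.2 j).val : ℤ)) (ST9.tau R y) 0)
          Filter.atTop (nhds (ST9.Lfun R c)) := by
      intro c _
      exact ST9.core R c.1 c.2 (ST9.mR c.1) (ST9.mR_nonneg c.1) (ST9.Sfun c.1)
        (ST9.hmin_all c.1) (ST9.hgap_all c.1)
    have h2 := tendsto_finset_prod ST9.evens h1
    apply h2.congr
    intro y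
    rw [ST9.prod_exp_eq]
    rfl
end
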